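/- arXiv:1808.02099 — 3 statements merged into one kernel-verified Lean document; each statement's English description precedes it below -/
import Mathlib

section
/- Let k be a field, A = k[x₁,…,x_s], J = ⟨f₁,…,f_r⟩ an ideal of A, B = A/J, and n ≥ 1. For 1 ≤ i ≤ r and β ∈ ℕ^s with 0 ≤ |β| ≤ n−1, set F^i_β := (d^n_A(x))^β · d^n_A(f_i) ∈ Ω^{(n)}_{A/k}, where (d^n_A(x))^β := (d^n_A(x₁))^{β₁}⋯(d^n_A(x_s))^{β_s}. Then the B-submodule of Ω^{(n)}_{A/k} ⊗_A B generated by { F^i_β ⊗ 1 : 1 ≤ i ≤ r, 0 ≤ |β| ≤ n−1 } equals the B-submodule generated by the image of the map J → Ω^{(n)}_{A/k} ⊗_A B, c ↦ d^n_A(c) ⊗ 1. -/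
set_option synthInstance.maxHeartbeats 1000000
set_option maxHeartbeats 1000000

open TensorProduct

section Defs

variable (k A : Type*) [CommRing k] [CommRing A] [Algebra k A]

/-- The ring of principal parts of order `n`: `(A ⊗[k] A) ⧸ I_A^{n+1}`,
an `A`-algebra via the left factor. -/
noncomputable abbrev PParts (n : ℕ) : Type _ :=
  (A ⊗[k] A) ⧸ (KaehlerDifferential.ideal k A ^ (n + 1))

/-- The module of Kähler differentials of order `n`, `Ω^{(n)}_{A/k} = I_A/I_A^{n+1}`,
realized as the `A`-submodule `I_A/I_A^{n+1}` of `(A ⊗[k] A) ⧸ I_A^{n+1}`. -/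
noncomputable def OmegaMod (n : ℕ) : Submodule A (PParts k A n) :=
  Submodule.restrictScalars A
    (Ideal.map (Ideal.Quotient.mk (KaehlerDifferential.ideal k A ^ (n + 1)))
      (KaehlerDifferential.ideal k A))

/-- The canonical derivation of order `n`, with values in the ambient ring of principal parts:
`d^n_A(a) = (1 ⊗ a - a ⊗ 1) + I_A^{n+1}`. -/
noncomputable def dPP (n : ℕ) (a : A) : PParts k A n :=
  Ideal.Quotient.mk _ ((1 : A) ⊗ₜ[k] a - a ⊗ₜ[k] (1 : A))

theorem dPP_mem (n : ℕ) (a : A) : dPP k A n a ∈ OmegaMod k A n :=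
  Ideal.mem_map_of_mem _ (KaehlerDifferential.one_smul_sub_smul_one_mem_ideal k a)

theorem mul_dPP_mem (n : ℕ) (x : PParts k A n) (a : A) :
    x * dPP k A n a ∈ OmegaMod k A n :=
  Ideal.mul_mem_left _ x (dPP_mem k A n a)

/-- The canonical derivation of order `n` as a map into `Ω^{(n)}_{A/k}`. -/
noncomputable def dN (n : ℕ) (a : A) : OmegaMod k A n :=
  ⟨dPP k A n a, dPP_mem k A n a⟩

/-- The product `d^n_A(g) · d^n_A(a)`, an element of `Ω^{(n)}_{A/k}`. -/
noncomputable def dMulD (n : ℕ) (g a : A) : OmegaMod k A n :=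
  ⟨dPP k A n g * dPP k A n a, mul_dPP_mem k A n (dPP k A n g) a⟩

end Defs

section FDefs

variable (k : Type*) [CommRing k] {s : ℕ}

/-- `F^i_β = (d^n_A(x))^β · d^n_A(f_i)`, an element of `Ω^{(n)}_{A/k}` for
`A = k[x₁,…,x_s]`. -/
noncomputable def Fel (n : ℕ) (f : MvPolynomial (Fin s) k) (β : Fin s →₀ ℕ) :
    OmegaMod k (MvPolynomial (Fin s) k) n :=
  ⟨(∏ j, dPP k (MvPolynomial (Fin s) k) n (MvPolynomial.X j) ^ β j) *
      dPP k (MvPolynomial (Fin s) k) n f,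
    mul_dPP_mem k (MvPolynomial (Fin s) k) n _ f⟩

end FDefs



section Helpers

variable {k A : Type*} [CommRing k] [CommRing A] [Algebra k A] {n : ℕ}

lemma smul_mk' (a : A) (x : A ⊗[k] A) :
    a • (Ideal.Quotient.mk (KaehlerDifferential.ideal k A ^ (n+1)) x) =
      Ideal.Quotient.mk _ ((a ⊗ₜ[k] (1:A)) * x) := by
  have : a • (Ideal.Quotient.mk (KaehlerDifferential.ideal k A ^ (n+1)) x)
      = Ideal.Quotient.mk _ (a • x) := rfl
  rw [this, Algebra.smul_def]; rfl

lemma dPP_add (a b : A) : dPP k A n (a + b) = dPP k A n a + dPP k A n b := by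
  simp only [dPP, TensorProduct.tmul_add, TensorProduct.add_tmul, ← map_add]
  congr 1; abel

lemma dPP_zero : dPP k A n (0 : A) = 0 := by
  simp [dPP]

lemma dPP_mul (a b : A) : dPP k A n (a * b) =
    a • dPP k A n b + b • dPP k A n a + dPP k A n a * dPP k A n b := by
  simp only [dPP, smul_mk']
  rw [← map_mul, ← map_add, ← map_add]
  congr 1
  simp [mul_sub, sub_mul, Algebra.TensorProduct.tmul_mul_tmul, mul_comm a b]

lemma dPP_algebraMap (c : k) : dPP k A n (algebraMap k A c) = 0 := by
  have : (1:A) ⊗ₜ[k] (algebraMap k A c) - (algebraMap k A c) ⊗ₜ[k] (1:A) = 0 := by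
    rw [Algebra.algebraMap_eq_smul_one, TensorProduct.tmul_smul, TensorProduct.smul_tmul]
    simp
  simp [dPP, this]

lemma mem_pow_sum {R : Type*} [CommRing R] (I : Ideal R) {ι : Type*} (t : Finset ι)
    (g : ι → R) (β : ι → ℕ) (hg : ∀ j ∈ t, g j ∈ I) :
    (∏ j ∈ t, g j ^ β j) ∈ I ^ (∑ j ∈ t, β j) := by
  classical
  induction t using Finset.induction_on with
  | empty => simp
  | @insert a t' hj ih =>
    rw [Finset.prod_insert hj, Finset.sum_insert hj, pow_add]
    exact Ideal.mul_mem_mul (Ideal.pow_mem_pow (hg a (Finset.mem_insert_self a t')) _)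
      (ih fun j hjt => hg j (Finset.mem_insert_of_mem hjt))

lemma prod_dPP_pow_mul_eq_zero {s : ℕ} (x : Fin s → A) (β : Fin s → ℕ)
    (hβ : n ≤ ∑ j, β j) (b : A) :
    (∏ j, dPP k A n (x j) ^ β j) * dPP k A n b = 0 := by
  have h1 : (∏ j, dPP k A n (x j) ^ β j) * dPP k A n b =
      Ideal.Quotient.mk (KaehlerDifferential.ideal k A ^ (n+1))
        ((∏ j, ((1:A) ⊗ₜ[k] (x j) - (x j) ⊗ₜ[k] (1:A)) ^ β j) *
          ((1:A) ⊗ₜ[k] b - b ⊗ₜ[k] (1:A))) := by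
    simp [dPP, map_prod, map_pow, map_mul]
  rw [h1, Ideal.Quotient.eq_zero_iff_mem]
  have h2 : (∏ j, ((1:A) ⊗ₜ[k] (x j) - (x j) ⊗ₜ[k] (1:A)) ^ β j) ∈
      (KaehlerDifferential.ideal k A) ^ (∑ j, β j) :=
    mem_pow_sum _ _ _ _ fun j _ => KaehlerDifferential.one_smul_sub_smul_one_mem_ideal k (x j)
  have h3 := Ideal.mul_mem_mul h2 (KaehlerDifferential.one_smul_sub_smul_one_mem_ideal k b)
  rw [← pow_succ] at h3
  exact Ideal.pow_le_pow_right (by omega) h3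

end Helpers

section Taylor

variable {k : Type*} [CommRing k] {s n : ℕ}

local notation "Av" => MvPolynomial (Fin s) k

noncomputable def dxProd (n : ℕ) (β : Fin s →₀ ℕ) : PParts k Av n :=
  ∏ j, dPP k Av n (MvPolynomial.X j) ^ β j

lemma dxProd_mul (β γ : Fin s →₀ ℕ) :
    dxProd (k := k) n β * dxProd n γ = dxProd n (β + γ) := by
  simp [dxProd, ← Finset.prod_mul_distrib, pow_add]

lemma dxProd_zero : dxProd (k := k) (s := s) n 0 = 1 := by simp [dxProd]

lemma dxProd_single (j : Fin s) :
    dxProd (k := k) n (Finsupp.single j 1) = dPP k Av n (MvPolynomial.X j) := by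
  rw [dxProd, Fintype.prod_eq_single j]
  · simp
  · intro x hx; simp [Finsupp.single_apply, Ne.symm hx]

lemma taylor_span (g : Av) :
    dPP k Av n g ∈ Submodule.span Av
      {x : PParts k Av n | ∃ β : Fin s →₀ ℕ, β ≠ 0 ∧ x = dxProd n β} := by
  induction g using MvPolynomial.induction_on with
  | C a =>
    rw [show MvPolynomial.C a = algebraMap k Av a from rfl, dPP_algebraMap]
    exact Submodule.zero_mem _
  | add p q hp hq => rw [dPP_add]; exact Submodule.add_mem _ hp hq
  | mul_X p j hp =>
    rw [dPP_mul]
    have hXj : dPP k Av n (MvPolynomial.X j) ∈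
        {x : PParts k Av n | ∃ β : Fin s →₀ ℕ, β ≠ 0 ∧ x = dxProd n β} := by
      refine ⟨Finsupp.single j 1, ?_, (dxProd_single j).symm⟩
      simp [Finsupp.single_eq_zero]
    refine Submodule.add_mem _ (Submodule.add_mem _
      (Submodule.smul_mem _ _ (Submodule.subset_span hXj))
      (Submodule.smul_mem _ _ hp)) ?_
    refine Submodule.span_induction (p := fun x _ =>
        x * dPP k Av n (MvPolynomial.X j) ∈ Submodule.span Av
          {x : PParts k Av n | ∃ β : Fin s →₀ ℕ, β ≠ 0 ∧ x = dxProd n β})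
      ?_ ?_ ?_ ?_ hp
    · rintro x ⟨β, hβ, rfl⟩
      rw [← dxProd_single j, dxProd_mul]
      refine Submodule.subset_span ⟨β + Finsupp.single j 1, ?_, rfl⟩
      intro h
      have := DFunLike.congr_fun h j
      simp at this
    · simp
    · intro x y _ _ hx hy; rw [add_mul]; exact Submodule.add_mem _ hx hy
    · intro a x _ hx; rw [smul_mul_assoc]; exact Submodule.smul_mem _ _ hx

end Taylor

section Main

variable {k : Type*} [Field k] {s r : ℕ}

/-- The canonical A-linear map `Ω → B ⊗[A] Ω`, `ω ↦ 1 ⊗ ω`. -/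
noncomputable def phiT (f : Fin r → MvPolynomial (Fin s) k) (n : ℕ) :
    ↥(OmegaMod k (MvPolynomial (Fin s) k) n) →ₗ[MvPolynomial (Fin s) k]
      (MvPolynomial (Fin s) k ⧸ Ideal.span (Set.range f)) ⊗[MvPolynomial (Fin s) k]
        ↥(OmegaMod k (MvPolynomial (Fin s) k) n) :=
  TensorProduct.mk _ _ _ 1

lemma phiT_apply (f : Fin r → MvPolynomial (Fin s) k) (n : ℕ)
    (x : ↥(OmegaMod k (MvPolynomial (Fin s) k) n)) :
    phiT f n x = (1 : MvPolynomial (Fin s) k ⧸ Ideal.span (Set.range f)) ⊗ₜ x := rfl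

lemma phiT_smul (f : Fin r → MvPolynomial (Fin s) k) (n : ℕ) (a : MvPolynomial (Fin s) k)
    (x : ↥(OmegaMod k (MvPolynomial (Fin s) k) n)) :
    phiT f n (a • x) = Ideal.Quotient.mk (Ideal.span (Set.range f)) a • phiT f n x := by
  rw [map_smul, ← algebraMap_smul (MvPolynomial (Fin s) k ⧸ Ideal.span (Set.range f)) a
    (phiT f n x), Ideal.Quotient.algebraMap_eq]

lemma phiT_Jsmul (f : Fin r → MvPolynomial (Fin s) k) (n : ℕ) (c : MvPolynomial (Fin s) k)
    (hc : c ∈ Ideal.span (Set.range f)) (x : ↥(OmegaMod k (MvPolynomial (Fin s) k) n)) :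
    phiT f n (c • x) = 0 := by
  rw [phiT_smul, Ideal.Quotient.eq_zero_iff_mem.mpr hc]; exact zero_smul (MvPolynomial (Fin s) k ⧸ Ideal.span (Set.range f)) (phiT f n x)

lemma L1 (f : Fin r → MvPolynomial (Fin s) k) (n : ℕ) (m : ℕ) :
    ∀ (β : Fin s →₀ ℕ), (∑ j, β j) ≤ m → ∀ c ∈ Ideal.span (Set.range f),
      phiT f n ⟨dxProd n β * dPP k (MvPolynomial (Fin s) k) n c,
          mul_dPP_mem k (MvPolynomial (Fin s) k) n _ c⟩ ∈
        Submodule.span (MvPolynomial (Fin s) k ⧸ Ideal.span (Set.range f))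
          { x | ∃ c ∈ Ideal.span (Set.range f),
              x = (1 : MvPolynomial (Fin s) k ⧸ Ideal.span (Set.range f)) ⊗ₜ
                dN k (MvPolynomial (Fin s) k) n c } := by
  induction m with
  | zero =>
    intro β hβ c hc
    have hβ0 : β = 0 := by
      ext j; exact Finset.sum_eq_zero_iff.mp (Nat.le_zero.mp hβ) j (Finset.mem_univ j)
    subst hβ0
    have h0 : (⟨dxProd n 0 * dPP k (MvPolynomial (Fin s) k) n c,
        mul_dPP_mem k (MvPolynomial (Fin s) k) n _ c⟩ :
          ↥(OmegaMod k (MvPolynomial (Fin s) k) n)) = dN k (MvPolynomial (Fin s) k) n c :=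
      Subtype.ext (show dxProd n 0 * dPP k (MvPolynomial (Fin s) k) n c =
        dPP k (MvPolynomial (Fin s) k) n c by rw [dxProd_zero, one_mul])
    rw [h0]
    exact Submodule.subset_span ⟨c, hc, rfl⟩
  | succ m ih =>
    intro β hβ c hc
    by_cases hle : (∑ j, β j) ≤ m
    · exact ih β hle c hc
    · obtain ⟨j, hj⟩ : ∃ j, β j ≠ 0 := by
        by_contra hcon; push_neg at hcon
        exact hle (le_trans (le_of_eq (Finset.sum_eq_zero fun j _ => hcon j)) (Nat.zero_le m))
      set β' := β - Finsupp.single j 1 with hβ'def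
      have hsplit : β' + Finsupp.single j 1 = β :=
        tsub_add_cancel_of_le (by rwa [Finsupp.single_le_iff, Nat.one_le_iff_ne_zero])
      have hsum : (∑ j', β' j') ≤ m := by
        have h1 : (∑ j', β j') = (∑ j', β' j') + 1 := by
          conv_lhs => rw [← hsplit]
          rw [Finset.sum_congr rfl (fun x _ => Finsupp.add_apply β' (Finsupp.single j 1) x),
            Finset.sum_add_distrib]
          congr 1
          simp [Finsupp.single_apply]
        omega
      have hw : (⟨dxProd n β * dPP k (MvPolynomial (Fin s) k) n c,
            mul_dPP_mem k (MvPolynomial (Fin s) k) n _ c⟩ :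
              ↥(OmegaMod k (MvPolynomial (Fin s) k) n)) =
          ⟨dxProd n β' * dPP k (MvPolynomial (Fin s) k) n (MvPolynomial.X j * c),
              mul_dPP_mem k (MvPolynomial (Fin s) k) n _ _⟩
          - (MvPolynomial.X j : MvPolynomial (Fin s) k) • ⟨dxProd n β' * dPP k (MvPolynomial (Fin s) k) n c,
              mul_dPP_mem k (MvPolynomial (Fin s) k) n _ c⟩
          - c • ⟨dxProd n β' * dPP k (MvPolynomial (Fin s) k) n (MvPolynomial.X j),
              mul_dPP_mem k (MvPolynomial (Fin s) k) n _ _⟩ := by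
        apply Subtype.ext
        show dxProd n β * dPP k (MvPolynomial (Fin s) k) n c =
          dxProd n β' * dPP k (MvPolynomial (Fin s) k) n (MvPolynomial.X j * c)
          - MvPolynomial.X j • (dxProd n β' * dPP k (MvPolynomial (Fin s) k) n c)
          - c • (dxProd n β' * dPP k (MvPolynomial (Fin s) k) n (MvPolynomial.X j))
        rw [← hsplit, ← dxProd_mul, dxProd_single, dPP_mul]
        simp only [mul_add, mul_smul_comm, mul_assoc]
        abel
      rw [hw, map_sub, map_sub, phiT_smul, phiT_Jsmul f n c hc, sub_zero]
      exact Submodule.sub_mem _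
        (ih β' hsum (MvPolynomial.X j * c) (Ideal.mul_mem_left _ _ hc))
        (Submodule.smul_mem _ _ (ih β' hsum c hc))

end Main

section Main2

variable {k : Type*} [Field k] {s r : ℕ}

set_option maxHeartbeats 4000000 in
lemma L2 (f : Fin r → MvPolynomial (Fin s) k) (n : ℕ) (hn : 1 ≤ n) :
    ∀ c ∈ Ideal.span (Set.range f), ∀ (β : Fin s →₀ ℕ),
      phiT f n ⟨dxProd n β * dPP k (MvPolynomial (Fin s) k) n c,
          mul_dPP_mem k (MvPolynomial (Fin s) k) n _ c⟩ ∈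
        Submodule.span (MvPolynomial (Fin s) k ⧸ Ideal.span (Set.range f))
          { x | ∃ (i : Fin r) (β : Fin s →₀ ℕ), (∑ j, β j) ≤ n - 1 ∧
              x = (1 : MvPolynomial (Fin s) k ⧸ Ideal.span (Set.range f)) ⊗ₜ Fel k n (f i) β } := by
  intro c hc
  refine Submodule.span_induction (p := fun c _ => ∀ (β : Fin s →₀ ℕ),
      phiT f n ⟨dxProd n β * dPP k (MvPolynomial (Fin s) k) n c,
          mul_dPP_mem k (MvPolynomial (Fin s) k) n _ c⟩ ∈
        Submodule.span (MvPolynomial (Fin s) k ⧸ Ideal.span (Set.range f))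
          { x | ∃ (i : Fin r) (β : Fin s →₀ ℕ), (∑ j, β j) ≤ n - 1 ∧
              x = (1 : MvPolynomial (Fin s) k ⧸ Ideal.span (Set.range f)) ⊗ₜ Fel k n (f i) β })
    ?_ ?_ ?_ ?_ hc
  · rintro x ⟨i, rfl⟩ β
    by_cases hb : (∑ j, β j) ≤ n - 1
    · exact Submodule.subset_span ⟨i, β, hb, rfl⟩
    · have hge : n ≤ ∑ j, β j := by omega
      have hz : dxProd n β * dPP k (MvPolynomial (Fin s) k) n (f i) = 0 :=
        prod_dPP_pow_mul_eq_zero MvPolynomial.X (fun j => β j) hge (f i)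
      have h0 : (⟨dxProd n β * dPP k (MvPolynomial (Fin s) k) n (f i),
          mul_dPP_mem k (MvPolynomial (Fin s) k) n _ (f i)⟩ :
            ↥(OmegaMod k (MvPolynomial (Fin s) k) n)) = 0 := Subtype.ext hz
      rw [h0, map_zero]
      exact Submodule.zero_mem _
  · intro β
    have h0 : (⟨dxProd n β * dPP k (MvPolynomial (Fin s) k) n 0,
        mul_dPP_mem k (MvPolynomial (Fin s) k) n _ 0⟩ :
          ↥(OmegaMod k (MvPolynomial (Fin s) k) n)) = 0 :=
      Subtype.ext (show dxProd n β * dPP k (MvPolynomial (Fin s) k) n 0 =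
        (0 : PParts k (MvPolynomial (Fin s) k) n) by rw [dPP_zero, mul_zero])
    rw [h0, map_zero]
    exact Submodule.zero_mem _
  · intro x y _ _ hpx hpy β
    have h0 : (⟨dxProd n β * dPP k (MvPolynomial (Fin s) k) n (x + y),
        mul_dPP_mem k (MvPolynomial (Fin s) k) n _ (x + y)⟩ :
          ↥(OmegaMod k (MvPolynomial (Fin s) k) n)) =
        ⟨dxProd n β * dPP k (MvPolynomial (Fin s) k) n x,
          mul_dPP_mem k (MvPolynomial (Fin s) k) n _ x⟩ +
        ⟨dxProd n β * dPP k (MvPolynomial (Fin s) k) n y,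
          mul_dPP_mem k (MvPolynomial (Fin s) k) n _ y⟩ := by
      apply Subtype.ext
      show dxProd n β * dPP k (MvPolynomial (Fin s) k) n (x + y) =
        dxProd n β * dPP k (MvPolynomial (Fin s) k) n x +
        dxProd n β * dPP k (MvPolynomial (Fin s) k) n y
      rw [dPP_add, mul_add]
    rw [h0, map_add]
    exact Submodule.add_mem _ (hpx β) (hpy β)
  · intro a x hx hpx β
    have h0 : (⟨dxProd n β * dPP k (MvPolynomial (Fin s) k) n (a • x),
        mul_dPP_mem k (MvPolynomial (Fin s) k) n _ (a • x)⟩ :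
          ↥(OmegaMod k (MvPolynomial (Fin s) k) n)) =
        a • ⟨dxProd n β * dPP k (MvPolynomial (Fin s) k) n x,
          mul_dPP_mem k (MvPolynomial (Fin s) k) n _ x⟩ +
        x • ⟨dxProd n β * dPP k (MvPolynomial (Fin s) k) n a,
          mul_dPP_mem k (MvPolynomial (Fin s) k) n _ a⟩ +
        ⟨dxProd n β * dPP k (MvPolynomial (Fin s) k) n a * dPP k (MvPolynomial (Fin s) k) n x,
          mul_dPP_mem k (MvPolynomial (Fin s) k) n _ x⟩ := by
      apply Subtype.ext
      show dxProd n β * dPP k (MvPolynomial (Fin s) k) n (a • x) =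
        a • (dxProd n β * dPP k (MvPolynomial (Fin s) k) n x) +
        x • (dxProd n β * dPP k (MvPolynomial (Fin s) k) n a) +
        dxProd n β * dPP k (MvPolynomial (Fin s) k) n a * dPP k (MvPolynomial (Fin s) k) n x
      rw [smul_eq_mul, dPP_mul]
      simp only [mul_add, mul_smul_comm, ← mul_assoc]
    rw [h0, map_add, map_add, phiT_smul, phiT_Jsmul f n x hx, add_zero]
    refine Submodule.add_mem _ (Submodule.smul_mem _ _ (hpx β)) ?_
    -- third term via Taylor expansion of `dPP a`
    set Ψ : PParts k (MvPolynomial (Fin s) k) n →ₗ[MvPolynomial (Fin s) k]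
        (MvPolynomial (Fin s) k ⧸ Ideal.span (Set.range f)) ⊗[MvPolynomial (Fin s) k]
          ↥(OmegaMod k (MvPolynomial (Fin s) k) n) :=
      { toFun := fun y => phiT f n ⟨dxProd n β * y * dPP k (MvPolynomial (Fin s) k) n x,
          mul_dPP_mem k (MvPolynomial (Fin s) k) n _ x⟩
        map_add' := fun y z => by
          rw [show (⟨dxProd n β * (y + z) * dPP k (MvPolynomial (Fin s) k) n x,
              mul_dPP_mem k (MvPolynomial (Fin s) k) n _ x⟩ :
                ↥(OmegaMod k (MvPolynomial (Fin s) k) n)) =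
              ⟨dxProd n β * y * dPP k (MvPolynomial (Fin s) k) n x,
                mul_dPP_mem k (MvPolynomial (Fin s) k) n _ x⟩ +
              ⟨dxProd n β * z * dPP k (MvPolynomial (Fin s) k) n x,
                mul_dPP_mem k (MvPolynomial (Fin s) k) n _ x⟩ from
            Subtype.ext (show dxProd n β * (y + z) * dPP k (MvPolynomial (Fin s) k) n x =
              dxProd n β * y * dPP k (MvPolynomial (Fin s) k) n x +
              dxProd n β * z * dPP k (MvPolynomial (Fin s) k) n x by ring), map_add]
        map_smul' := fun a y => by
          rw [show (⟨dxProd n β * (a • y) * dPP k (MvPolynomial (Fin s) k) n x,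
              mul_dPP_mem k (MvPolynomial (Fin s) k) n _ x⟩ :
                ↥(OmegaMod k (MvPolynomial (Fin s) k) n)) =
              a • ⟨dxProd n β * y * dPP k (MvPolynomial (Fin s) k) n x,
                mul_dPP_mem k (MvPolynomial (Fin s) k) n _ x⟩ from
            Subtype.ext (show dxProd n β * (a • y) * dPP k (MvPolynomial (Fin s) k) n x =
              a • (dxProd n β * y * dPP k (MvPolynomial (Fin s) k) n x) by
                rw [mul_smul_comm, smul_mul_assoc]), map_smul]
          rfl } with hΨ
    have hmem : Ψ (dPP k (MvPolynomial (Fin s) k) n a) ∈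
        Submodule.map Ψ (Submodule.span (MvPolynomial (Fin s) k)
          {x : PParts k (MvPolynomial (Fin s) k) n |
            ∃ β : Fin s →₀ ℕ, β ≠ 0 ∧ x = dxProd n β}) :=
      Submodule.mem_map_of_mem (taylor_span a)
    rw [Submodule.map_span] at hmem
    have hsub : Submodule.span (MvPolynomial (Fin s) k)
        (Ψ '' {x : PParts k (MvPolynomial (Fin s) k) n |
          ∃ β : Fin s →₀ ℕ, β ≠ 0 ∧ x = dxProd n β}) ≤
        Submodule.restrictScalars (MvPolynomial (Fin s) k)
          (Submodule.span (MvPolynomial (Fin s) k ⧸ Ideal.span (Set.range f))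
            { x | ∃ (i : Fin r) (β : Fin s →₀ ℕ), (∑ j, β j) ≤ n - 1 ∧
                x = (1 : MvPolynomial (Fin s) k ⧸ Ideal.span (Set.range f)) ⊗ₜ
                  Fel k n (f i) β }) := by
      refine le_trans (Submodule.span_le_restrictScalars (MvPolynomial (Fin s) k)
        (MvPolynomial (Fin s) k ⧸ Ideal.span (Set.range f)) _) ?_
      intro t ht
      rw [Submodule.restrictScalars_mem] at ht ⊢
      refine Submodule.span_le.mpr ?_ ht
      rintro _ ⟨y, ⟨γ, hγ, rfl⟩, rfl⟩
      have heq : (⟨dxProd n β * dxProd n γ * dPP k (MvPolynomial (Fin s) k) n x,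
          mul_dPP_mem k (MvPolynomial (Fin s) k) n _ x⟩ :
            ↥(OmegaMod k (MvPolynomial (Fin s) k) n)) =
          ⟨dxProd n (β + γ) * dPP k (MvPolynomial (Fin s) k) n x,
            mul_dPP_mem k (MvPolynomial (Fin s) k) n _ x⟩ :=
        Subtype.ext (by rw [dxProd_mul])
      show phiT f n ⟨dxProd n β * dxProd n γ * dPP k (MvPolynomial (Fin s) k) n x,
          mul_dPP_mem k (MvPolynomial (Fin s) k) n _ x⟩ ∈ _
      rw [heq]
      exact hpx (β + γ)
    have := hsub hmem
    rw [Submodule.restrictScalars_mem] at this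
    have hval : Ψ (dPP k (MvPolynomial (Fin s) k) n a) =
        phiT f n ⟨dxProd n β * dPP k (MvPolynomial (Fin s) k) n a *
            dPP k (MvPolynomial (Fin s) k) n x,
          mul_dPP_mem k (MvPolynomial (Fin s) k) n _ x⟩ := rfl
    rwa [hval] at this

end Main2

set_option maxHeartbeats 4000000 in
/-- For `A = k[x₁,…,x_s]`, `J = ⟨f₁,…,f_r⟩`, `B = A/J` and `n ≥ 1`, the
`B`-submodule of the base change of `Ω^{(n)}_{A/k}` to `B` generated by the elements
`F^i_β ⊗ 1` (for `1 ≤ i ≤ r` and `0 ≤ |β| ≤ n−1`) coincides with the `B`-submodule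
generated by the image of `J → Ω^{(n)}_{A/k} ⊗_A B`, `c ↦ d^n_A(c) ⊗ 1`.
(The base change `Ω^{(n)}_{A/k} ⊗_A B` is realized here as `B ⊗[A] Ω^{(n)}_{A/k}`, which
carries the canonical `B`-module structure in Mathlib.) -/
theorem statement_1 {k : Type*} [Field k] (s r n : ℕ) (hn : 1 ≤ n)
    (f : Fin r → MvPolynomial (Fin s) k) :
    Submodule.span (MvPolynomial (Fin s) k ⧸ Ideal.span (Set.range f))
      { x : (MvPolynomial (Fin s) k ⧸ Ideal.span (Set.range f)) ⊗[MvPolynomial (Fin s) k]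
          ↥(OmegaMod k (MvPolynomial (Fin s) k) n) |
        ∃ (i : Fin r) (β : Fin s →₀ ℕ), (∑ j, β j) ≤ n - 1 ∧
          x = (1 : MvPolynomial (Fin s) k ⧸ Ideal.span (Set.range f)) ⊗ₜ Fel k n (f i) β } =
    Submodule.span (MvPolynomial (Fin s) k ⧸ Ideal.span (Set.range f))
      { x | ∃ c ∈ Ideal.span (Set.range f),
          x = (1 : MvPolynomial (Fin s) k ⧸ Ideal.span (Set.range f)) ⊗ₜ
            dN k (MvPolynomial (Fin s) k) n c } := by
  exact le_antisymm
    (Submodule.span_le.mpr (by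
      rintro x ⟨i, β, hβ, rfl⟩
      exact L1 f n (∑ j, β j) β le_rfl (f i) (Ideal.subset_span ⟨i, rfl⟩)))
    (Submodule.span_le.mpr (by
      rintro x ⟨c, hc, rfl⟩
      have h := L2 f n hn c hc 0
      have h0 : (⟨dxProd n 0 * dPP k (MvPolynomial (Fin s) k) n c,
          mul_dPP_mem k (MvPolynomial (Fin s) k) n _ c⟩ :
            ↥(OmegaMod k (MvPolynomial (Fin s) k) n)) = dN k (MvPolynomial (Fin s) k) n c :=
        Subtype.ext (show dxProd n 0 * dPP k (MvPolynomial (Fin s) k) n c =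
          dPP k (MvPolynomial (Fin s) k) n c by rw [dxProd_zero, one_mul])
      rw [h0] at h
      exact h))
end

section
/- Let k be a field, A = k[x₁,…,x_s], J = ⟨f₁,…,f_r⟩, B = A/J, n ≥ 1, N = C(s+n, s) and M = C(s+n−1, s). Let T : B^{rM} → B^{N−1} be the B-linear map given by the transpose of the matrix Jac_n(f₁,…,f_r) with entries reduced modulo J, and let π : B^{N−1} → Ω^{(n)}_{B/k} send the basis vector e_α (for α ∈ ℕ^s, 1 ≤ |α| ≤ n) to (d^n_B(x̄))^α. Then the sequence B^{rM} → B^{N−1} → Ω^{(n)}_{B/k} → 0 is exact; i.e. π is surjective and its kernel is the image of T. -/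
set_option synthInstance.maxHeartbeats 1000000
set_option maxHeartbeats 1000000

open TensorProduct

section Jac

open MvPolynomial

variable (k : Type*) [CommRing k] {s : ℕ}

/-- The Hasse derivative `f^{[γ]}`: the coefficient of `t^γ` in `f(x+t)`. -/
noncomputable def hasseDeriv (γ : Fin s →₀ ℕ) (f : MvPolynomial (Fin s) k) :
    MvPolynomial (Fin s) k :=
  MvPolynomial.coeff γ
    (MvPolynomial.aeval (R := k)
      (fun i => MvPolynomial.C (MvPolynomial.X i) + MvPolynomial.X i) f)

/-- The entry `c_{β,α}` of the higher-order Jacobian matrix: `f^{[α−β]}` if `β ≤ α` and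
`β ≠ α`, and `0` otherwise. -/
noncomputable def cEntry (f : MvPolynomial (Fin s) k) (β α : Fin s →₀ ℕ) :
    MvPolynomial (Fin s) k :=
  if β ≤ α ∧ β ≠ α then hasseDeriv k (α - β) f else 0

end Jac

/-- The row index set `{β ∈ ℕ^s : |β| ≤ n−1}` of the higher-order Jacobian matrix. -/
def RowIdx (s n : ℕ) : Type := {β : Fin s →₀ ℕ // (∑ i, β i) ≤ n - 1}

/-- The column index set `{α ∈ ℕ^s : 1 ≤ |α| ≤ n}` of the higher-order Jacobian matrix. -/
def ColIdx (s n : ℕ) : Type := {α : Fin s →₀ ℕ // 1 ≤ (∑ i, α i) ∧ (∑ i, α i) ≤ n}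

noncomputable instance (s m : ℕ) : Fintype {β : Fin s →₀ ℕ // (∑ i, β i) ≤ m} :=
  Fintype.ofInjective
    (fun β => (fun i => (⟨β.1 i, Nat.lt_succ_of_le
      (le_trans (Finset.single_le_sum (fun j _ => Nat.zero_le (β.1 j)) (Finset.mem_univ i)) β.2)⟩ :
        Fin (m + 1))) : _ → (Fin s → Fin (m + 1)))
    (by
      intro a b h
      apply Subtype.ext
      ext i
      exact congrArg Fin.val (congrFun h i))

noncomputable instance (s n : ℕ) : Fintype (RowIdx s n) := by
  unfold RowIdx; infer_instance

noncomputable instance (s n : ℕ) : Fintype (ColIdx s n) := by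
  unfold ColIdx
  exact Fintype.ofInjective
    (fun α => (⟨α.1, α.2.2⟩ : {β : Fin s →₀ ℕ // (∑ i, β i) ≤ n}))
    (by intro a b h; have h2 := congrArg Subtype.val h; exact Subtype.ext h2)

instance (s n : ℕ) : DecidableEq (RowIdx s n) := by
  unfold RowIdx; infer_instance

instance (s n : ℕ) : DecidableEq (ColIdx s n) := by
  unfold ColIdx; infer_instance

/-- The higher-order Jacobian matrix `Jac_n(f)` of a single polynomial `f`. -/
noncomputable def JacMat {k : Type*} [CommRing k] {s : ℕ} (n : ℕ)
    (f : MvPolynomial (Fin s) k) :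
    Matrix (RowIdx s n) (ColIdx s n) (MvPolynomial (Fin s) k) :=
  fun β α => cEntry k f β.1 α.1

/-- The higher-order Jacobian matrix `Jac_n(f₁,…,f_r)` of a family of polynomials,
with rows indexed by pairs `(i, β)`. -/
noncomputable def JacMatFam {k : Type*} [CommRing k] {s : ℕ} (n r : ℕ)
    (f : Fin r → MvPolynomial (Fin s) k) :
    Matrix (Fin r × RowIdx s n) (ColIdx s n) (MvPolynomial (Fin s) k) :=
  fun p α => cEntry k (f p.1) p.2.1 α.1


namespace Stmt3Aux
open MvPolynomial

section DegIdeal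
variable (R : Type*) [CommRing R] (s : ℕ)

noncomputable def yId : Ideal (MvPolynomial (Fin s) R) := Ideal.span (Set.range X)

def degId (m : ℕ) : Ideal (MvPolynomial (Fin s) R) where
  carrier := {p | ∀ γ ∈ p.support, m ≤ ∑ i, γ i}
  zero_mem' := by simp
  add_mem' := by
    intro a b ha hb γ hγ
    have := MvPolynomial.support_add (p := a) (q := b) hγ
    rcases Finset.mem_union.mp this with h | h
    · exact ha γ h
    · exact hb γ h
  smul_mem' := by
    intro c p hp γ hγ
    rw [smul_eq_mul] at hγ
    have := MvPolynomial.support_mul (p := c) (q := p) hγ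
    rcases Finset.mem_add.mp this with ⟨u, hu, v, hv, rfl⟩
    calc m ≤ ∑ i, v i := hp v hv
    _ ≤ ∑ i, (u + v) i := by
        apply Finset.sum_le_sum; intro i _; simp

theorem mem_degId {m : ℕ} {p : MvPolynomial (Fin s) R} :
    p ∈ degId R s m ↔ ∀ γ ∈ p.support, m ≤ ∑ i, γ i := Iff.rfl

theorem degId_mul_le (a b : ℕ) : degId R s a * degId R s b ≤ degId R s (a + b) := by
  rw [Ideal.mul_le]
  intro p hp q hq γ hγ
  have := MvPolynomial.support_mul (p := p) (q := q) hγ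
  rcases Finset.mem_add.mp this with ⟨u, hu, v, hv, rfl⟩
  have h1 := hp u hu
  have h2 := hq v hv
  have : ∑ i, (u + v) i = (∑ i, u i) + ∑ i, v i := by
    rw [← Finset.sum_add_distrib]; rfl
  omega

theorem yId_le_degId_one : yId R s ≤ degId R s 1 := by
  rw [yId, Ideal.span_le]
  rintro _ ⟨j, rfl⟩ γ hγ
  rw [MvPolynomial.X, MvPolynomial.mem_support_iff, MvPolynomial.coeff_monomial] at hγ
  split at hγ
  · next h => subst h; simp
  · exact absurd rfl hγ

theorem yId_pow_le (m : ℕ) : yId R s ^ m ≤ degId R s m := by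
  induction m with
  | zero => intro p _; simp [mem_degId]
  | succ m ih =>
      rw [pow_succ]
      calc yId R s ^ m * yId R s ≤ degId R s m * degId R s 1 :=
            Ideal.mul_mono ih (yId_le_degId_one R s)
      _ ≤ degId R s (m + 1) := degId_mul_le R s m 1

theorem monomial_mem_yId_pow {m : ℕ} {γ : Fin s →₀ ℕ} (c : R) (h : m ≤ ∑ i, γ i) :
    monomial γ c ∈ yId R s ^ m := by
  induction m generalizing γ with
  | zero => simp
  | succ m ih =>
      have hne : ∃ j, γ j ≠ 0 := by
        by_contra hall
        push_neg at hall
        simp [hall] at h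
      obtain ⟨j, hj⟩ := hne
      have hle : Finsupp.single j 1 ≤ γ := by
        rw [Finsupp.single_le_iff]; omega
      have key : monomial γ c = X j * monomial (γ - Finsupp.single j 1) c := by
        rw [MvPolynomial.X, MvPolynomial.monomial_mul, one_mul,
          add_tsub_cancel_of_le hle]
      rw [key, pow_succ']
      refine Ideal.mul_mem_mul ?_ (ih ?_)
      · exact Ideal.subset_span ⟨j, rfl⟩
      · have h2 : (γ - Finsupp.single j 1) + Finsupp.single j 1 = γ :=
          tsub_add_cancel_of_le hle
        have hsum : ∑ i, γ i = (∑ i, (γ - Finsupp.single j 1 : Fin s →₀ ℕ) i) + 1 := by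
          conv_lhs => rw [← h2]
          simp only [Finsupp.add_apply, Finset.sum_add_distrib]
          congr 1
          simp [Finsupp.single_apply, Finset.sum_ite_eq']
        omega

theorem degId_le_yId_pow (m : ℕ) : degId R s m ≤ yId R s ^ m := by
  intro p hp
  rw [MvPolynomial.as_sum p]
  refine Ideal.sum_mem _ fun γ hγ => ?_
  exact monomial_mem_yId_pow R s _ (hp γ hγ)

theorem yId_pow_eq (m : ℕ) : yId R s ^ m = degId R s m :=
  le_antisymm (yId_pow_le R s m) (degId_le_yId_pow R s m)


end DegIdeal

theorem mem_yId_pow {R : Type*} [CommRing R] {s m : ℕ} {p : MvPolynomial (Fin s) R} :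
    p ∈ yId R s ^ m ↔ ∀ γ ∈ p.support, m ≤ ∑ i, γ i := by
  rw [yId_pow_eq]; rfl

theorem mem_yId' {R : Type*} [CommRing R] {s : ℕ} {p : MvPolynomial (Fin s) R} :
    p ∈ yId R s ↔ ∀ γ ∈ p.support, 1 ≤ ∑ i, γ i := by
  rw [← pow_one (yId R s), mem_yId_pow]

section Main
variable {k : Type*} [CommRing k] {s r : ℕ} (f : Fin r → MvPolynomial (Fin s) k)

/-- `B = k[x]/J`. -/
abbrev Bq := MvPolynomial (Fin s) k ⧸ Ideal.span (Set.range f)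

/-- `ε_A : A → A[y]`, `x_j ↦ x_j + y_j`. -/
noncomputable def epsA : MvPolynomial (Fin s) k →ₐ[k] MvPolynomial (Fin s) (MvPolynomial (Fin s) k) :=
  aeval (fun j => C (X j) + X j)

theorem hasseDeriv_def (γ : Fin s →₀ ℕ) (a : MvPolynomial (Fin s) k) :
    hasseDeriv k γ a = coeff γ (epsA a) := rfl

theorem hasseDeriv_zero' (a : MvPolynomial (Fin s) k) : hasseDeriv k 0 a = a := by
  have h : (constantCoeff (R := MvPolynomial (Fin s) k) (σ := Fin s)).comp
      (epsA (k := k) (s := s) : MvPolynomial (Fin s) k →+* _) = RingHom.id _ := by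
    apply MvPolynomial.ringHom_ext
    · intro c
      simp [epsA, MvPolynomial.algebraMap_eq]
    · intro j
      simp [epsA]
  have := RingHom.congr_fun h a
  simpa [hasseDeriv_def, ← MvPolynomial.constantCoeff_eq] using this

/-- `ε_B : A → B[y]`, `x_j ↦ x̄_j + y_j`. -/
noncomputable def epsB : MvPolynomial (Fin s) k →ₐ[k] MvPolynomial (Fin s) (Bq f) :=
  aeval (fun j => C (Ideal.Quotient.mk (Ideal.span (Set.range f)) (X j)) + X j)

theorem epsB_eq_map (a : MvPolynomial (Fin s) k) :
    epsB f a = MvPolynomial.map (Ideal.Quotient.mk (Ideal.span (Set.range f))) (epsA a) := by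
  have h : (epsB f) = (MvPolynomial.mapAlgHom (σ := Fin s)
      (Ideal.Quotient.mkₐ k (Ideal.span (Set.range f)))).comp (epsA (k := k) (s := s)) := by
    apply MvPolynomial.algHom_ext
    intro j
    simp [epsB, epsA]
  rw [h]
  rfl

theorem coeff_epsB (γ : Fin s →₀ ℕ) (a : MvPolynomial (Fin s) k) :
    coeff γ (epsB f a) = Ideal.Quotient.mk (Ideal.span (Set.range f)) (hasseDeriv k γ a) := by
  rw [epsB_eq_map, MvPolynomial.coeff_map, hasseDeriv_def]

/-- `ψ : B[y] → B ⊗ B`, `y_j ↦ 1⊗x̄_j − x̄_j⊗1`. -/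
noncomputable def psi : MvPolynomial (Fin s) (Bq f) →ₐ[Bq f] (Bq f) ⊗[k] (Bq f) :=
  aeval (fun j => (1 : Bq f) ⊗ₜ[k] (Ideal.Quotient.mk (Ideal.span (Set.range f)) (X j)) -
    (Ideal.Quotient.mk (Ideal.span (Set.range f)) (X j)) ⊗ₜ[k] (1 : Bq f))

theorem psi_C (b : Bq f) : psi f (C b) = b ⊗ₜ[k] 1 := by
  rw [psi, aeval_C]
  rfl

theorem psi_epsB (a : MvPolynomial (Fin s) k) :
    psi f (epsB f a) = (1 : Bq f) ⊗ₜ[k] (Ideal.Quotient.mk (Ideal.span (Set.range f)) a) := by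
  have h : ((psi f).restrictScalars k).comp (epsB f) =
      (Algebra.TensorProduct.includeRight (R := k) (A := Bq f) (B := Bq f)).comp
        (Ideal.Quotient.mkₐ k (Ideal.span (Set.range f))) := by
    apply MvPolynomial.algHom_ext
    intro j
    simp only [AlgHom.coe_comp, AlgHom.coe_restrictScalars', Function.comp_apply,
      epsB, aeval_X, map_add, Algebra.TensorProduct.includeRight_apply,
      Ideal.Quotient.mkₐ_eq_mk]
    rw [psi_C]
    rw [psi, aeval_X]
    abel
  exact AlgHom.congr_fun h a

theorem psi_surjective : Function.Surjective (psi f) := by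
  intro z
  induction z using TensorProduct.induction_on with
  | zero => exact ⟨0, map_zero _⟩
  | tmul b1 b2 =>
      obtain ⟨a2, rfl⟩ := Ideal.Quotient.mk_surjective b2
      refine ⟨C b1 * epsB f a2, ?_⟩
      rw [map_mul, psi_C, psi_epsB, Algebra.TensorProduct.tmul_mul_tmul, mul_one, one_mul]
  | add x y hx hy =>
      obtain ⟨p, rfl⟩ := hx
      obtain ⟨q, rfl⟩ := hy
      exact ⟨p + q, map_add _ _ _⟩

/-- `G i = f_i(x̄ + y) ∈ B[y]`. -/
noncomputable def G (i : Fin r) : MvPolynomial (Fin s) (Bq f) := epsB f (f i)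

theorem coeff_G (γ : Fin s →₀ ℕ) (i : Fin r) :
    coeff γ (G f i) = Ideal.Quotient.mk (Ideal.span (Set.range f)) (hasseDeriv k γ (f i)) :=
  coeff_epsB f γ (f i)

theorem coeff_G_zero (i : Fin r) : coeff 0 (G f i) = 0 := by
  rw [coeff_G, hasseDeriv_zero', Ideal.Quotient.eq_zero_iff_mem]
  exact Ideal.subset_span ⟨i, rfl⟩

noncomputable def spanG : Ideal (MvPolynomial (Fin s) (Bq f)) := Ideal.span (Set.range (G f))

theorem psi_G (i : Fin r) : psi f (G f i) = 0 := by
  rw [G, psi_epsB]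
  have h0 : Ideal.Quotient.mk (Ideal.span (Set.range f)) (f i) = 0 := by
    rw [Ideal.Quotient.eq_zero_iff_mem]; exact Ideal.subset_span ⟨i, rfl⟩
  rw [h0, TensorProduct.tmul_zero]

noncomputable abbrev instCommRingBq : CommRing (Bq f) := Ideal.Quotient.commRing _

attribute [local instance] instCommRingBq

noncomputable abbrev instCommRingBqQuot : CommRing (MvPolynomial (Fin s) (Bq f) ⧸ spanG f) :=
  Ideal.Quotient.commRing _

attribute [local instance] instCommRingBqQuot

noncomputable def rho0 : MvPolynomial (Fin s) k →ₐ[k] (MvPolynomial (Fin s) (Bq f) ⧸ spanG f) :=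
  (Ideal.Quotient.mkₐ k (spanG f)).comp (epsB f)

theorem rho0_vanish : ∀ a ∈ Ideal.span (Set.range f), rho0 f a = 0 := by
  intro a ha
  have h : Ideal.span (Set.range f) ≤ RingHom.ker (rho0 f) := by
    rw [Ideal.span_le]
    rintro _ ⟨i, rfl⟩
    have : rho0 f (f i) = 0 := by
      show Ideal.Quotient.mkₐ k (spanG f) (epsB f (f i)) = 0
      rw [Ideal.Quotient.mkₐ_eq_mk, Ideal.Quotient.eq_zero_iff_mem]
      exact Ideal.subset_span ⟨i, rfl⟩
    exact this
  exact h ha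

noncomputable def leftMap : Bq f →ₐ[k] (MvPolynomial (Fin s) (Bq f) ⧸ spanG f) :=
  (Ideal.Quotient.mkₐ k (spanG f)).comp
    ((Algebra.ofId (Bq f) (MvPolynomial (Fin s) (Bq f))).restrictScalars k)

noncomputable def rightMap : Bq f →ₐ[k] (MvPolynomial (Fin s) (Bq f) ⧸ spanG f) :=
  Ideal.Quotient.liftₐ (Ideal.span (Set.range f)) (rho0 f) (rho0_vanish f)

noncomputable def chi : (Bq f) ⊗[k] (Bq f) →ₐ[k] (MvPolynomial (Fin s) (Bq f) ⧸ spanG f) :=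
  Algebra.TensorProduct.productMap (leftMap f) (rightMap f)

theorem chi_psi (p : MvPolynomial (Fin s) (Bq f)) :
    chi f (psi f p) = Ideal.Quotient.mk (spanG f) p := by
  have h : ((chi f).toRingHom.comp (psi f).toRingHom) =
      (Ideal.Quotient.mk (spanG f)) := by
    apply MvPolynomial.ringHom_ext
    · intro b
      simp only [RingHom.coe_comp, Function.comp_apply, AlgHom.toRingHom_eq_coe,
        RingHom.coe_coe, MvPolynomial.C_apply]
      rw [show (monomial 0 b : MvPolynomial (Fin s) (Bq f)) = C b from rfl, psi_C,
        chi, Algebra.TensorProduct.productMap_apply_tmul, map_one, mul_one]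
      show Ideal.Quotient.mkₐ k (spanG f) (Algebra.ofId (Bq f) _ b) = _
      rw [Algebra.ofId_apply, MvPolynomial.algebraMap_eq, Ideal.Quotient.mkₐ_eq_mk]
    · intro j
      simp only [RingHom.coe_comp, Function.comp_apply, AlgHom.toRingHom_eq_coe, RingHom.coe_coe]
      rw [psi, aeval_X, map_sub]
      have h1 : chi f ((1 : Bq f) ⊗ₜ[k] (Ideal.Quotient.mk (Ideal.span (Set.range f)) (X j))) =
          Ideal.Quotient.mk (spanG f)
            (C (Ideal.Quotient.mk (Ideal.span (Set.range f)) (X j)) + X j) := by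
        rw [chi, Algebra.TensorProduct.productMap_apply_tmul, map_one, one_mul, rightMap]
        rw [Ideal.Quotient.liftₐ_apply]
        show Ideal.Quotient.mkₐ k (spanG f) (epsB f (X j)) = _
        rw [epsB, aeval_X, Ideal.Quotient.mkₐ_eq_mk]
      have h2 : chi f ((Ideal.Quotient.mk (Ideal.span (Set.range f)) (X j)) ⊗ₜ[k] (1 : Bq f)) =
          Ideal.Quotient.mk (spanG f)
            (C (Ideal.Quotient.mk (Ideal.span (Set.range f)) (X j))) := by
        rw [chi, Algebra.TensorProduct.productMap_apply_tmul, map_one, mul_one]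
        show Ideal.Quotient.mkₐ k (spanG f) (Algebra.ofId (Bq f) _ _) = _
        rw [Algebra.ofId_apply, MvPolynomial.algebraMap_eq, Ideal.Quotient.mkₐ_eq_mk]
      rw [h1, h2, ← map_sub, add_sub_cancel_left]
  exact RingHom.congr_fun h p

theorem ker_psi : RingHom.ker (psi f) = spanG f := by
  apply le_antisymm
  · intro p hp
    rw [RingHom.mem_ker] at hp
    have := chi_psi f p
    rw [hp, map_zero] at this
    rw [← Ideal.Quotient.eq_zero_iff_mem]
    exact this.symm
  · rw [spanG, Ideal.span_le]
    rintro _ ⟨i, rfl⟩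
    exact psi_G f i


-- NEW PART
theorem map_psi_yId :
    Ideal.map (psi f) (yId (Bq f) s) = KaehlerDifferential.ideal k (Bq f) := by
  apply le_antisymm
  · rw [Ideal.map_le_iff_le_comap, yId, Ideal.span_le]
    rintro _ ⟨j, rfl⟩
    rw [SetLike.mem_coe, Ideal.mem_comap]
    have : psi f (X j) = (1 : Bq f) ⊗ₜ[k] (Ideal.Quotient.mk (Ideal.span (Set.range f)) (X j)) -
        (Ideal.Quotient.mk (Ideal.span (Set.range f)) (X j)) ⊗ₜ[k] (1 : Bq f) := by
      rw [psi, aeval_X]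
    rw [this]
    exact KaehlerDifferential.one_smul_sub_smul_one_mem_ideal k _
  · rw [← KaehlerDifferential.span_range_eq_ideal, Ideal.span_le]
    rintro _ ⟨b, rfl⟩
    obtain ⟨a, rfl⟩ := Ideal.Quotient.mk_surjective b
    have hc0 : coeff 0 (epsB f a - C (Ideal.Quotient.mk (Ideal.span (Set.range f)) a)) = 0 := by
      rw [MvPolynomial.coeff_sub, coeff_epsB, hasseDeriv_zero', MvPolynomial.coeff_C]
      simp
    have hmem : epsB f a - C (Ideal.Quotient.mk (Ideal.span (Set.range f)) a) ∈ yId (Bq f) s := by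
      rw [mem_yId']
      intro γ hγ
      by_contra hlt
      push_neg at hlt
      have hγ0 : γ = 0 := by
        ext i
        have : ∑ i, γ i = 0 := by omega
        have := Finset.sum_eq_zero_iff.mp this i (Finset.mem_univ i)
        simpa using this
      rw [hγ0, MvPolynomial.mem_support_iff] at hγ
      exact hγ hc0
    have heq : psi f (epsB f a - C (Ideal.Quotient.mk (Ideal.span (Set.range f)) a)) =
        (1 : Bq f) ⊗ₜ[k] (Ideal.Quotient.mk (Ideal.span (Set.range f)) a) -
        (Ideal.Quotient.mk (Ideal.span (Set.range f)) a) ⊗ₜ[k] (1 : Bq f) := by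
      rw [map_sub, psi_epsB, psi_C]
    rw [SetLike.mem_coe]
    show (1 : Bq f) ⊗ₜ[k] (Ideal.Quotient.mk (Ideal.span (Set.range f)) a) -
        (Ideal.Quotient.mk (Ideal.span (Set.range f)) a) ⊗ₜ[k] (1 : Bq f) ∈
        Ideal.map (psi f) (yId (Bq f) s)
    rw [← heq]
    exact Ideal.mem_map_of_mem _ hmem

variable (n : ℕ)

-- NEW PART
variable (n : ℕ)

noncomputable def psi' : MvPolynomial (Fin s) (Bq f) →ₐ[Bq f] PParts k (Bq f) n :=
  (Ideal.Quotient.mkₐ (Bq f) (KaehlerDifferential.ideal k (Bq f) ^ (n + 1))).comp (psi f)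

theorem psi'_apply (p : MvPolynomial (Fin s) (Bq f)) :
    psi' f n p = Ideal.Quotient.mk (KaehlerDifferential.ideal k (Bq f) ^ (n + 1)) (psi f p) :=
  rfl

theorem psi'_surjective : Function.Surjective (psi' f n) := by
  intro z
  obtain ⟨y, rfl⟩ := Ideal.Quotient.mk_surjective z
  obtain ⟨p, rfl⟩ := psi_surjective f y
  exact ⟨p, rfl⟩

theorem ker_psi' : RingHom.ker (psi' f n) = yId (Bq f) s ^ (n + 1) ⊔ spanG f := by
  have h1 : RingHom.ker (psi' f n) =
      Ideal.comap (psi f) (KaehlerDifferential.ideal k (Bq f) ^ (n + 1)) := by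
    ext p
    rw [RingHom.mem_ker, Ideal.mem_comap, psi'_apply, Ideal.Quotient.eq_zero_iff_mem]
  have hco : (Ideal.map (psi f) : Ideal (MvPolynomial (Fin s) (Bq f)) → Ideal ((Bq f) ⊗[k] (Bq f))) =
      Ideal.map (psi f).toRingHom := rfl
  have hmp : ∀ m : ℕ, Ideal.map (psi f) (yId (Bq f) s ^ (m + 1)) =
      Ideal.map (psi f) (yId (Bq f) s) ^ (m + 1) := by
    intro m
    rw [hco]
    exact Ideal.map_pow (psi f).toRingHom (yId (Bq f) s) (m + 1)
  rw [h1, ← map_psi_yId f, ← hmp,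
    Ideal.comap_map_of_surjective _ (psi_surjective f)]
  congr 1
  rw [← ker_psi f]
  rfl

theorem mem_ker_psi' (p : MvPolynomial (Fin s) (Bq f)) :
    psi' f n p = 0 ↔ p ∈ yId (Bq f) s ^ (n + 1) ⊔ spanG f := by
  rw [← ker_psi' f n, RingHom.mem_ker]

theorem omega_ideal_eq :
    Ideal.map (Ideal.Quotient.mk (KaehlerDifferential.ideal k (Bq f) ^ (n + 1)))
        (KaehlerDifferential.ideal k (Bq f)) =
      Ideal.map (psi' f n) (yId (Bq f) s) := by
  apply le_antisymm
  · rw [Ideal.map_le_iff_le_comap]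
    intro x hx
    rw [← map_psi_yId f] at hx
    obtain ⟨q, hq, rfl⟩ := Ideal.mem_map_iff_of_surjective _ (psi_surjective f) |>.mp hx
    rw [Ideal.mem_comap]
    exact Ideal.mem_map_of_mem _ hq
  · rw [Ideal.map_le_iff_le_comap]
    intro q hq
    rw [Ideal.mem_comap, psi'_apply]
    refine Ideal.mem_map_of_mem _ ?_
    rw [← map_psi_yId f]
    exact Ideal.mem_map_of_mem _ hq

theorem psi'_monomial (γ : Fin s →₀ ℕ) (c : Bq f) :
    psi' f n (monomial γ c) = algebraMap (Bq f) (PParts k (Bq f) n) c *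
      ∏ j, dPP k (Bq f) n (Ideal.Quotient.mk (Ideal.span (Set.range f)) (X j)) ^ γ j := by
  have hmon : (monomial γ c : MvPolynomial (Fin s) (Bq f)) =
      C c * ∏ j, (X j : MvPolynomial (Fin s) (Bq f)) ^ γ j := by
    rw [MvPolynomial.monomial_eq]
    congr 1
    exact Finsupp.prod_fintype _ _ (fun i => pow_zero _)
  rw [hmon, map_mul, map_prod]
  congr 1
  · show psi' f n (algebraMap (Bq f) _ c) = _
    rw [AlgHom.commutes]
  · refine Finset.prod_congr rfl fun j _ => ?_
    rw [map_pow]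
    congr 1
    rw [psi'_apply]
    rw [show psi f (X j) = (1 : Bq f) ⊗ₜ[k] (Ideal.Quotient.mk (Ideal.span (Set.range f)) (X j)) -
      (Ideal.Quotient.mk (Ideal.span (Set.range f)) (X j)) ⊗ₜ[k] (1 : Bq f) by rw [psi, aeval_X]]
    rfl


-- ============ NEW PART ============

theorem sum_lt_of_le_of_ne {β γ : Fin s →₀ ℕ} (h : β ≤ γ) (hne : β ≠ γ) :
    (∑ i, β i) < ∑ i, γ i := by
  have hle : ∀ i, β i ≤ γ i := fun i => Finsupp.le_def.mp h i
  have : ∃ j, β j ≠ γ j := by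
    by_contra hall
    push_neg at hall
    exact hne (Finsupp.ext hall)
  obtain ⟨j, hj⟩ := this
  exact Finset.sum_lt_sum (fun i _ => hle i)
    ⟨j, Finset.mem_univ j, lt_of_le_of_ne (hle j) hj⟩

theorem mem_omegaMod_iff (x : PParts k (Bq f) n) :
    x ∈ OmegaMod k (Bq f) n ↔ x ∈ Ideal.map (psi' f n) (yId (Bq f) s) := by
  rw [OmegaMod, Submodule.restrictScalars_mem, omega_ideal_eq]

theorem monomial_mem_yId {γ : Fin s →₀ ℕ} (hγ : 1 ≤ ∑ i, γ i) (c : Bq f) :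
    (monomial γ c : MvPolynomial (Fin s) (Bq f)) ∈ yId (Bq f) s := by
  rw [mem_yId']
  intro δ hδ
  have := MvPolynomial.support_monomial_subset hδ
  rw [Finset.mem_singleton] at this
  subst this
  exact hγ

theorem prod_dPP_mem (α : ColIdx s n) :
    (∏ j, dPP k (Bq f) n (Ideal.Quotient.mk (Ideal.span (Set.range f)) (X j)) ^ α.1 j) ∈
      OmegaMod k (Bq f) n := by
  rw [mem_omegaMod_iff]
  have h1 : (∏ j, dPP k (Bq f) n (Ideal.Quotient.mk (Ideal.span (Set.range f)) (X j)) ^ α.1 j) =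
      psi' f n (monomial α.1 1) := by
    rw [psi'_monomial, map_one, one_mul]
  rw [h1]
  exact Ideal.mem_map_of_mem _ (monomial_mem_yId f α.2.1 1)

noncomputable def omegaEl (α : ColIdx s n) : OmegaMod k (Bq f) n :=
  ⟨∏ j, dPP k (Bq f) n (Ideal.Quotient.mk (Ideal.span (Set.range f)) (X j)) ^ α.1 j,
    prod_dPP_mem f n α⟩

noncomputable def piMap : (ColIdx s n → Bq f) →ₗ[Bq f] OmegaMod k (Bq f) n :=
  Fintype.linearCombination (Bq f) (omegaEl f n)

theorem piMap_single (α : ColIdx s n) :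
    ((piMap f n (Pi.single α 1) : OmegaMod k (Bq f) n) : PParts k (Bq f) n) =
      ∏ j, dPP k (Bq f) n (Ideal.Quotient.mk (Ideal.span (Set.range f)) (X j)) ^ α.1 j := by
  rw [piMap, Fintype.linearCombination_apply_single, one_smul, omegaEl]

/-- The polynomial `∑_α v(α) y^α`. -/
noncomputable def pv (v : ColIdx s n → Bq f) : MvPolynomial (Fin s) (Bq f) :=
  ∑ α : ColIdx s n, monomial α.1 (v α)

theorem coeff_pv (v : ColIdx s n → Bq f) (γ : Fin s →₀ ℕ) :
    coeff γ (pv f n v) =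
      if h : 1 ≤ (∑ i, γ i) ∧ (∑ i, γ i) ≤ n then v ⟨γ, h⟩ else 0 := by
  rw [pv, MvPolynomial.coeff_sum]
  simp only [MvPolynomial.coeff_monomial]
  split
  · next h =>
      have hst := Finset.sum_eq_single_of_mem (⟨γ, h⟩ : ColIdx s n) (Finset.mem_univ _)
        (f := fun x : ColIdx s n => if x.1 = γ then v x else 0)
        (fun b _ hb => if_neg fun hc => hb (Subtype.ext hc))
      rw [hst]
      exact if_pos rfl
  · next h =>
      apply Finset.sum_eq_zero
      intro α _
      rw [if_neg]
      intro hc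
      exact h (hc ▸ α.2)

theorem piMap_val (v : ColIdx s n → Bq f) :
    ((piMap f n v : OmegaMod k (Bq f) n) : PParts k (Bq f) n) = psi' f n (pv f n v) := by
  rw [piMap, Fintype.linearCombination_apply, pv, map_sum]
  rw [Submodule.coe_sum]
  refine Finset.sum_congr rfl fun α _ => ?_
  rw [psi'_monomial]
  show v α • ((omegaEl f n α : OmegaMod k (Bq f) n) : PParts k (Bq f) n) = _
  rw [omegaEl]
  exact Algebra.smul_def (v α)
    (∏ j, dPP k (Bq f) n (Ideal.Quotient.mk (Ideal.span (Set.range f)) (X j)) ^ α.1 j)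

theorem piMap_surjective : Function.Surjective (piMap f n) := by
  intro x
  have hx : (x : PParts k (Bq f) n) ∈ Ideal.map (psi' f n) (yId (Bq f) s) :=
    (mem_omegaMod_iff f n _).mp x.2
  obtain ⟨p, hp, hpx⟩ := Ideal.mem_map_iff_of_surjective _ (psi'_surjective f n) |>.mp hx
  refine ⟨fun α => coeff α.1 p, ?_⟩
  apply Subtype.ext
  rw [piMap_val, ← hpx]
  have hker : pv f n (fun α => coeff α.1 p) - p ∈ yId (Bq f) s ^ (n + 1) := by
    rw [mem_yId_pow]
    intro γ hγ
    by_contra hlt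
    push_neg at hlt
    have hsle : (∑ i, γ i) ≤ n := by omega
    rw [MvPolynomial.mem_support_iff] at hγ
    apply hγ
    rw [MvPolynomial.coeff_sub, coeff_pv]
    split
    · next h => simp
    · next h =>
        have hγ0 : (∑ i, γ i) = 0 := by omega
        have : γ = 0 := by
          ext i
          have := Finset.sum_eq_zero_iff.mp hγ0 i (Finset.mem_univ i)
          simpa using this
        subst this
        have h0 : coeff 0 p = 0 := by
          by_contra hc
          have := (mem_yId'.mp hp) 0 (MvPolynomial.mem_support_iff.mpr hc)
          simp at this
        rw [h0, sub_zero]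
  have : psi' f n (pv f n (fun α => coeff α.1 p) - p) = 0 := by
    rw [mem_ker_psi']
    exact Ideal.mem_sup_left hker
  rw [map_sub, sub_eq_zero] at this
  exact this

noncomputable def Tlin : (Fin r × RowIdx s n → Bq f) →ₗ[Bq f] (ColIdx s n → Bq f) :=
  Matrix.mulVecLin
    (((JacMatFam n r f).map (Ideal.Quotient.mk (Ideal.span (Set.range f)))).transpose)

theorem Tlin_apply (w : Fin r × RowIdx s n → Bq f) (α : ColIdx s n) :
    Tlin f n w α = ∑ p : Fin r × RowIdx s n,
      Ideal.Quotient.mk (Ideal.span (Set.range f)) (cEntry k (f p.1) p.2.1 α.1) * w p := by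
  simp only [Tlin, Matrix.mulVecLin_apply, Matrix.mulVec, dotProduct,
    Matrix.transpose_apply, Matrix.map_apply, JacMatFam]

theorem term_eq (i : Fin r) (β γ : Fin s →₀ ℕ) (c : Bq f) :
    (if β ≤ γ then c * coeff (γ - β) (G f i) else 0) =
      Ideal.Quotient.mk (Ideal.span (Set.range f)) (cEntry k (f i) β γ) * c := by
  by_cases h1 : β ≤ γ
  · by_cases h2 : β = γ
    · subst h2
      rw [if_pos h1, tsub_self, coeff_G_zero, mul_zero, cEntry, if_neg (by simp), map_zero,
        zero_mul]
    · rw [if_pos h1, coeff_G, cEntry, if_pos ⟨h1, h2⟩, mul_comm]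
  · rw [if_neg h1, cEntry, if_neg (by tauto), map_zero, zero_mul]

theorem coeff_mul_expand (q : MvPolynomial (Fin s) (Bq f)) (γ : Fin s →₀ ℕ) (i : Fin r) :
    coeff γ (q * G f i) = ∑ β ∈ q.support,
      (if β ≤ γ then coeff β q * coeff (γ - β) (G f i) else 0) := by
  conv_lhs => rw [MvPolynomial.as_sum q]
  rw [Finset.sum_mul, MvPolynomial.coeff_sum]
  exact Finset.sum_congr rfl fun β _ => MvPolynomial.coeff_monomial_mul' _ _ _ _

theorem range_le_ker (w : Fin r × RowIdx s n → Bq f) : piMap f n (Tlin f n w) = 0 := by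
  classical
  set q : MvPolynomial (Fin s) (Bq f) :=
    ∑ p : Fin r × RowIdx s n, monomial p.2.1 (w p) * G f p.1 with hqdef
  have hq : q ∈ spanG f := by
    refine Ideal.sum_mem _ fun p _ => ?_
    exact Ideal.mul_mem_left _ _ (Ideal.subset_span ⟨p.1, rfl⟩)
  have hcoeffq : ∀ γ : Fin s →₀ ℕ, coeff γ q =
      ∑ p : Fin r × RowIdx s n,
        (if p.2.1 ≤ γ then w p * coeff (γ - p.2.1) (G f p.1) else 0) := by
    intro γ
    rw [hqdef, MvPolynomial.coeff_sum]
    exact Finset.sum_congr rfl fun p _ => MvPolynomial.coeff_monomial_mul' _ _ _ _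
  have hker : pv f n (Tlin f n w) - q ∈ yId (Bq f) s ^ (n + 1) := by
    rw [mem_yId_pow]
    intro γ hγ
    by_contra hlt
    push_neg at hlt
    have hsle : (∑ i, γ i) ≤ n := by omega
    rw [MvPolynomial.mem_support_iff] at hγ
    apply hγ
    rw [MvPolynomial.coeff_sub, coeff_pv, hcoeffq]
    split
    · next h =>
        rw [sub_eq_zero]
        rw [show Tlin f n w ⟨γ, h⟩ = _ from Tlin_apply f n w ⟨γ, h⟩]
        exact Finset.sum_congr rfl fun p _ => (term_eq f p.1 p.2.1 γ (w p)).symm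
    · next h =>
        have hγ0 : γ = 0 := by
          have h0 : (∑ i, γ i) = 0 := by omega
          ext i
          have := Finset.sum_eq_zero_iff.mp h0 i (Finset.mem_univ i)
          simpa using this
        subst hγ0
        rw [zero_sub, neg_eq_zero]
        apply Finset.sum_eq_zero
        intro p _
        split
        · next hle =>
            have hβ0 : p.2.1 = 0 := by
              ext i
              exact Nat.le_zero.mp (Finsupp.le_def.mp hle i)
            rw [hβ0, tsub_self, coeff_G_zero, mul_zero]
        · rfl
  apply Subtype.ext
  rw [piMap_val, Submodule.coe_zero]
  rw [show pv f n (Tlin f n w) = (pv f n (Tlin f n w) - q) + q from (sub_add_cancel _ _).symm]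
  rw [mem_ker_psi' f n]
  exact Submodule.add_mem_sup hker hq

theorem ker_le_range (v : ColIdx s n → Bq f) (hv : piMap f n v = 0) :
    ∃ w : Fin r × RowIdx s n → Bq f, Tlin f n w = v := by
  classical
  have hval : psi' f n (pv f n v) = 0 := by
    rw [← piMap_val, hv, Submodule.coe_zero]
  rw [mem_ker_psi' f n] at hval
  obtain ⟨q, hq, g', hg', hsum⟩ := Submodule.mem_sup.mp hval
  have hg2 : g' ∈ Submodule.span (MvPolynomial (Fin s) (Bq f)) (Set.range (G f)) := hg'
  obtain ⟨c, hc⟩ := (Submodule.mem_span_range_iff_exists_fun _).mp hg2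
  refine ⟨fun p => coeff p.2.1 (c p.1), ?_⟩
  funext α
  -- v α = coeff α.1 (pv f n v)
  have hv1 : v α = coeff α.1 (pv f n v) := by
    rw [coeff_pv, dif_pos α.2]
    exact (congrArg v (Subtype.coe_eta _ _)).symm
  have hqz : coeff α.1 q = 0 := by
    by_contra hc0
    have := (mem_yId_pow.mp hq) α.1 (MvPolynomial.mem_support_iff.mpr hc0)
    have h2 := α.2.2
    omega
  have hv2 : v α = ∑ i, coeff α.1 (c i * G f i) := by
    rw [hv1, ← hsum, MvPolynomial.coeff_add, hqz, zero_add, ← hc]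
    have : (∑ i, c i • G f i) = ∑ i, c i * G f i := by
      simp [smul_eq_mul]
    rw [this, MvPolynomial.coeff_sum]
  rw [Tlin_apply, Fintype.sum_prod_type, hv2]
  refine Finset.sum_congr rfl fun i _ => ?_
  -- fixed i : Fin r
  set g : (Fin s →₀ ℕ) → Bq f :=
    fun β => Ideal.Quotient.mk (Ideal.span (Set.range f)) (cEntry k (f i) β α.1) *
      coeff β (c i) with hgdef
  have hstep1 : ∑ β : RowIdx s n,
      Ideal.Quotient.mk (Ideal.span (Set.range f)) (cEntry k (f i) β.1 α.1) *
        coeff β.1 (c i) =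
      ∑ β ∈ Finset.univ.image (Subtype.val : RowIdx s n → (Fin s →₀ ℕ)), g β := by
    rw [Finset.sum_image (fun x _ y _ h => Subtype.ext h)]
    rfl
  have hTrow : ∀ β : Fin s →₀ ℕ,
      β ∈ Finset.univ.image (Subtype.val : RowIdx s n → (Fin s →₀ ℕ)) ↔ (∑ i, β i) ≤ n - 1 := by
    intro β
    simp only [Finset.mem_image, Finset.mem_univ, true_and]
    constructor
    · rintro ⟨b, rfl⟩
      exact b.2
    · intro h
      exact ⟨⟨β, h⟩, rfl⟩
  have hstep2 : ∑ β ∈ Finset.univ.image (Subtype.val : RowIdx s n → (Fin s →₀ ℕ)), g β =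
      ∑ β ∈ Finset.univ.image (Subtype.val : RowIdx s n → (Fin s →₀ ℕ)) ∪ (c i).support, g β := by
    apply Finset.sum_subset Finset.subset_union_left
    intro β _ hnot
    rw [hTrow] at hnot
    rw [hgdef]
    have hcE : cEntry k (f i) β α.1 = 0 := by
      rw [cEntry, if_neg]
      rintro ⟨h1, h2⟩
      have := sum_lt_of_le_of_ne h1 h2
      have h3 := α.2.2
      omega
    simp [hcE]
  have hstep3 : ∑ β ∈ (c i).support, g β =
      ∑ β ∈ Finset.univ.image (Subtype.val : RowIdx s n → (Fin s →₀ ℕ)) ∪ (c i).support, g β := by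
    apply Finset.sum_subset Finset.subset_union_right
    intro β _ hnot
    rw [MvPolynomial.notMem_support_iff] at hnot
    rw [hgdef]
    simp [hnot]
  have hstep4 : coeff α.1 (c i * G f i) = ∑ β ∈ (c i).support, g β := by
    rw [coeff_mul_expand]
    exact Finset.sum_congr rfl fun β _ => term_eq f i β α.1 (coeff β (c i))
  rw [hstep1, hstep2, hstep4, hstep3]

theorem ker_piMap : LinearMap.ker (piMap f n) = LinearMap.range (Tlin f n) := by
  ext v
  rw [LinearMap.mem_ker, LinearMap.mem_range]
  constructor
  · exact ker_le_range f n v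
  · rintro ⟨w, rfl⟩
    exact range_le_ker f n w


end Main
end Stmt3Aux

/-- For `A = k[x₁,…,x_s]`, `J = ⟨f₁,…,f_r⟩`, `B = A/J` and `n ≥ 1`, the
sequence `B^{rM} → B^{N−1} → Ω^{(n)}_{B/k} → 0` is exact, where the first map `T` is given by
the transpose of `Jac_n(f₁,…,f_r)` reduced modulo `J`, and the second map `π` sends the
basis vector `e_α` to `(d^n_B(x̄))^α`: i.e. `π` is surjective and `ker π = im T`.
(Here `B^{rM}` is the free module on pairs `(i,β)`, `1 ≤ i ≤ r`, `|β| ≤ n−1`, and `B^{N−1}` the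
free module on `{α : 1 ≤ |α| ≤ n}`.) -/
theorem statement_3 {k : Type*} [Field k] (s r n : ℕ) (hn : 1 ≤ n)
    (f : Fin r → MvPolynomial (Fin s) k) :
    ∃ π : ((ColIdx s n → (MvPolynomial (Fin s) k ⧸ Ideal.span (Set.range f))) →ₗ[
        MvPolynomial (Fin s) k ⧸ Ideal.span (Set.range f)]
        ↥(OmegaMod k (MvPolynomial (Fin s) k ⧸ Ideal.span (Set.range f)) n)),
      (∀ α : ColIdx s n,
        ((π (Pi.single α 1) :
            OmegaMod k (MvPolynomial (Fin s) k ⧸ Ideal.span (Set.range f)) n) :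
          PParts k (MvPolynomial (Fin s) k ⧸ Ideal.span (Set.range f)) n) =
        ∏ j, dPP k (MvPolynomial (Fin s) k ⧸ Ideal.span (Set.range f)) n
          (Ideal.Quotient.mk (Ideal.span (Set.range f)) (MvPolynomial.X j)) ^ α.1 j) ∧
      Function.Surjective π ∧
      LinearMap.ker π =
        LinearMap.range (Matrix.mulVecLin
          (((JacMatFam n r f).map (Ideal.Quotient.mk (Ideal.span (Set.range f)))).transpose)) := by
  exact ⟨Stmt3Aux.piMap f n, fun α => Stmt3Aux.piMap_single f n α,
    Stmt3Aux.piMap_surjective f n, Stmt3Aux.ker_piMap f n⟩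
end

section
/- Let k be a field, s ≥ 2, and f ∈ k[x₁,…,x_s] a nonzero polynomial with zero constant term. Let B = k[x₁,…,x_s]/⟨f⟩ and m = (x₁,…,x_s)B. Then for every n ≥ 0, dim_k m^n/m^{n+1} ≥ C(s−2+n, s−2). -/
set_option synthInstance.maxHeartbeats 1000000
set_option maxHeartbeats 1000000

set_option maxHeartbeats 4000000

open MvPolynomial

namespace St10Aux

variable {k : Type*} [Field k] {σ : Type*}

theorem degree_add (a b : σ →₀ ℕ) : (a + b).degree = a.degree + b.degree := by
  simp only [Finsupp.degree_eq_weight_one, map_add]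

theorem degree_single (i : σ) (e : ℕ) : (Finsupp.single i e).degree = e := by
  rcases eq_or_ne e 0 with rfl | he
  · simp [map_zero]
  · exact Finsupp.degree_single i e

theorem degree_eq_sum (d : σ →₀ ℕ) : d.degree = d.sum fun _ e => e := rfl

theorem degree_mono {a b : σ →₀ ℕ} (h : a ≤ b) : a.degree ≤ b.degree := by
  obtain ⟨c, rfl⟩ := le_iff_exists_add.mp h
  rw [St10Aux.degree_add]; omega

theorem monomial_one_mem_pow (b : σ →₀ ℕ) :
    monomial b (1 : k) ∈ (Ideal.span (Set.range (X (R := k) (σ := σ)))) ^ b.degree := by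
  induction b using Finsupp.induction with
  | zero => simp
  | single_add a e b ha he ih =>
      rw [monomial_single_add, St10Aux.degree_add, St10Aux.degree_single, pow_add]
      exact Ideal.mul_mem_mul
        (Ideal.pow_mem_pow (Ideal.subset_span (Set.mem_range_self a)) e) ih

theorem mem_pow_iff (N : ℕ) (p : MvPolynomial σ k) :
    p ∈ (Ideal.span (Set.range (X (R := k) (σ := σ)))) ^ N ↔
      ∀ b ∈ p.support, N ≤ b.degree := by
  have hS : ∀ M : ℕ, (Ideal.span (Set.range (X (R := k) (σ := σ)))) ^ M =
      Ideal.span ((fun b => monomial b (1 : k)) '' {b : σ →₀ ℕ | M ≤ b.degree}) := by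
    intro M
    apply le_antisymm
    · induction M with
      | zero =>
          rw [pow_zero, Ideal.one_eq_top, top_le_iff, Ideal.eq_top_iff_one]
          refine Ideal.subset_span ⟨0, by simp [map_zero], by simp⟩
      | succ M ih =>
          rw [pow_succ]
          have hX : (Ideal.span (Set.range (X (R := k) (σ := σ)))) ≤
              Ideal.span ((fun b => monomial b (1 : k)) '' {b : σ →₀ ℕ | 1 ≤ b.degree}) := by
            rw [Ideal.span_le]
            rintro _ ⟨i, rfl⟩
            exact Ideal.subset_span ⟨Finsupp.single i 1,
              by simp [St10Aux.degree_single], by simp [X]⟩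
          refine le_trans (Ideal.mul_mono ih hX) ?_
          rw [Ideal.span, Ideal.span, Submodule.span_mul_span, Submodule.span_le]
          rintro _ ⟨_, ⟨a, ha, rfl⟩, _, ⟨b, hb, rfl⟩, rfl⟩
          simp only []
          rw [show ((fun b => (monomial b) (1:k)) a * (fun b => (monomial b) (1:k)) b : MvPolynomial σ k)
            = monomial (a+b) 1 by simp [monomial_mul]]
          refine Ideal.subset_span ⟨a + b, ?_, rfl⟩
          simp only [Set.mem_setOf_eq] at ha hb ⊢
          rw [St10Aux.degree_add]; omega
    · rw [Ideal.span_le]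
      rintro _ ⟨b, hb, rfl⟩
      exact Ideal.pow_le_pow_right hb (monomial_one_mem_pow b)
  rw [hS, mem_ideal_span_monomial_image]
  constructor
  · intro h b hb
    obtain ⟨a, ha, hab⟩ := h b hb
    exact le_trans ha (degree_mono hab)
  · intro h b hb
    exact ⟨b, h b hb, le_rfl⟩

theorem homogeneousComponent_eq_zero_of_mem_pow {N i : ℕ} {p : MvPolynomial σ k}
    (hp : p ∈ (Ideal.span (Set.range (X (R := k) (σ := σ)))) ^ N) (hi : i < N) :
    homogeneousComponent i p = 0 := by
  refine homogeneousComponent_eq_zero' i p fun d hd => ?_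
  have := (mem_pow_iff N p).mp hp d hd
  omega

theorem homogeneousComponent_mem_pow (e : ℕ) (p : MvPolynomial σ k) :
    homogeneousComponent e p ∈ (Ideal.span (Set.range (X (R := k) (σ := σ)))) ^ e := by
  rw [mem_pow_iff]
  intro b hb
  rw [MvPolynomial.mem_support_iff, coeff_homogeneousComponent] at hb
  by_cases hbe : b.degree = e
  · omega
  · simp [hbe] at hb

theorem sub_homogeneousComponent_mem_pow {e : ℕ} {p : MvPolynomial σ k}
    (hp : p ∈ (Ideal.span (Set.range (X (R := k) (σ := σ)))) ^ e) :
    p - homogeneousComponent e p ∈ (Ideal.span (Set.range (X (R := k) (σ := σ)))) ^ (e + 1) := by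
  rw [mem_pow_iff]
  intro b hb
  rw [MvPolynomial.mem_support_iff, coeff_sub, coeff_homogeneousComponent] at hb
  by_cases hbe : b.degree = e
  · simp [hbe] at hb
  · simp only [hbe, if_false, sub_zero] at hb
    have := (mem_pow_iff e p).mp hp b (MvPolynomial.mem_support_iff.mpr hb)
    omega

theorem homogeneousComponent_mul_of_mem {g h : MvPolynomial σ k} {e d : ℕ}
    (hg : g ∈ (Ideal.span (Set.range (X (R := k) (σ := σ)))) ^ e)
    (hh : h ∈ (Ideal.span (Set.range (X (R := k) (σ := σ)))) ^ d) :
    homogeneousComponent (e + d) (g * h) =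
      homogeneousComponent e g * homogeneousComponent d h := by
  set M := Ideal.span (Set.range (X (R := k) (σ := σ))) with hM
  set ge := homogeneousComponent e g with hge
  set hd := homogeneousComponent d h with hhd
  have key : g * h = ge * hd + (ge * (h - hd) + ((g - ge) * hd + (g - ge) * (h - hd))) := by
    ring
  have h1 : homogeneousComponent (e + d) (ge * hd) = ge * hd := by
    have hmem : ge * hd ∈ homogeneousSubmodule σ k (e + d) :=
      (mem_homogeneousSubmodule _ _).mpr
        ((homogeneousComponent_isHomogeneous e g).mul (homogeneousComponent_isHomogeneous d h))
    rw [homogeneousComponent_of_mem hmem, if_pos rfl]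
  have h2 : ge * (h - hd) + ((g - ge) * hd + (g - ge) * (h - hd)) ∈ M ^ (e + d + 1) := by
    refine Ideal.add_mem _ ?_ (Ideal.add_mem _ ?_ ?_)
    · have := Ideal.mul_mem_mul (homogeneousComponent_mem_pow e g)
        (sub_homogeneousComponent_mem_pow hh)
      rw [← pow_add] at this
      exact Ideal.pow_le_pow_right (by omega) this
    · have := Ideal.mul_mem_mul (sub_homogeneousComponent_mem_pow hg)
        (homogeneousComponent_mem_pow d h)
      rw [← pow_add] at this
      exact Ideal.pow_le_pow_right (by omega) this
    · have := Ideal.mul_mem_mul (sub_homogeneousComponent_mem_pow hg)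
        (sub_homogeneousComponent_mem_pow hh)
      rw [← pow_add] at this
      exact Ideal.pow_le_pow_right (by omega) this
  calc homogeneousComponent (e + d) (g * h)
      = homogeneousComponent (e + d) (ge * hd) +
        homogeneousComponent (e + d) (ge * (h - hd) + ((g - ge) * hd + (g - ge) * (h - hd))) := by
        rw [← map_add, ← key]
    _ = ge * hd := by
        rw [h1, homogeneousComponent_eq_zero_of_mem_pow h2 (by omega), add_zero]

section Divisor

variable [DecidableEq σ]

noncomputable def psi (j : σ) : MvPolynomial σ k →+* Polynomial (MvPolynomial σ k) :=
  eval₂Hom (Polynomial.C.comp MvPolynomial.C)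
    (fun i => if i = j then Polynomial.C (X i) * Polynomial.X else Polynomial.C (X i))

theorem psi_X (j i : σ) : psi (k := k) j (X i) =
    if i = j then Polynomial.C (X i) * Polynomial.X else Polynomial.C (X i) := by
  simp [psi]

theorem psi_injective (j : σ) : Function.Injective (psi (k := k) (σ := σ) j) := by
  have h : (Polynomial.evalRingHom (1 : MvPolynomial σ k)).comp (psi j) = RingHom.id _ := by
    apply MvPolynomial.ringHom_ext
    · intro r; simp [psi]
    · intro i; by_cases hi : i = j <;> simp [psi, hi]
  intro a b hab
  have ha := RingHom.congr_fun h a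
  have hb := RingHom.congr_fun h b
  simp only [RingHom.coe_comp, Function.comp_apply, RingHom.id_apply] at ha hb
  rw [← ha, ← hb, hab]

theorem psi_monomial (j : σ) (b : σ →₀ ℕ) (c : k) :
    psi j (monomial b c) = Polynomial.C (monomial b c) * Polynomial.X ^ (b j) := by
  induction b using Finsupp.induction with
  | zero => simp [psi]
  | single_add a e b ha he ih =>
      rw [monomial_single_add, map_mul, map_pow, ih, psi_X]
      by_cases haj : a = j
      · subst haj
        rw [if_pos rfl, Finsupp.add_apply, Finsupp.single_eq_same,
          mul_pow, ← Polynomial.C_pow, map_mul, pow_add]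
        ring
      · rw [if_neg haj, Finsupp.add_apply,
          Finsupp.single_eq_of_ne (Ne.symm haj), zero_add, ← Polynomial.C_pow, map_mul]
        ring

theorem psi_eq_C (j : σ) {p : MvPolynomial σ k} (h : ∀ b ∈ p.support, b j = 0) :
    psi j p = Polynomial.C p := by
  conv_lhs => rw [p.as_sum, map_sum]
  conv_rhs => rw [p.as_sum, map_sum]
  refine Finset.sum_congr rfl fun b hb => ?_
  rw [psi_monomial, h b hb, pow_zero, mul_one]

theorem psi_coeff_ne (j : σ) (v : MvPolynomial σ k) (b : σ →₀ ℕ) (hb : b ∈ v.support) :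
    (psi j v).coeff (b j) ≠ 0 := by
  have hv : psi j v = ∑ b' ∈ v.support,
      Polynomial.C (monomial b' (coeff b' v)) * Polynomial.X ^ (b' j) := by
    conv_lhs => rw [v.as_sum, map_sum]
    exact Finset.sum_congr rfl fun b' _ => psi_monomial j b' _
  intro hc
  rw [hv, Polynomial.finset_sum_coeff] at hc
  have hcoeff : MvPolynomial.coeff b (∑ b' ∈ v.support,
      (Polynomial.C (monomial b' (coeff b' v)) * Polynomial.X ^ (b' j)).coeff (b j)) = 0 := by
    rw [hc, MvPolynomial.coeff_zero]
  rw [MvPolynomial.coeff_sum] at hcoeff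
  rw [Finset.sum_eq_single_of_mem b hb ?side] at hcoeff
  · simp at hcoeff
    exact (MvPolynomial.mem_support_iff.mp hb) hcoeff
  case side =>
    intro b' _ hne
    by_cases hbb : b j = b' j
    · simp [Polynomial.coeff_C_mul, Polynomial.coeff_X_pow, hbb,
        MvPolynomial.coeff_monomial, hne]
    · simp [Polynomial.coeff_C_mul, Polynomial.coeff_X_pow, hbb]

theorem divisor_support (j : σ) {u v : MvPolynomial σ k} (hu : u ≠ 0)
    (h : ∀ b ∈ (u * v).support, b j = 0) : ∀ b ∈ v.support, b j = 0 := by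
  by_cases hv : v = 0
  · simp [hv]
  intro b hb
  by_contra hbj
  have hpu : psi j u ≠ 0 := fun hh => hu (psi_injective j (by rw [hh, map_zero]))
  have hpv : psi j v ≠ 0 := fun hh => hv (psi_injective j (by rw [hh, map_zero]))
  have h1 : psi j (u * v) = Polynomial.C (u * v) := psi_eq_C j h
  have hdeg : (psi j u).natDegree + (psi j v).natDegree = 0 := by
    have h0 : (psi j u * psi j v).natDegree = 0 := by
      rw [← map_mul, h1]; exact Polynomial.natDegree_C _
    rwa [Polynomial.natDegree_mul hpu hpv] at h0
  have hle : b j ≤ (psi j v).natDegree :=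
    Polynomial.le_natDegree_of_ne_zero (psi_coeff_ne j v b hb)
  omega

end Divisor

theorem exists_good_var [DecidableEq σ] (f : MvPolynomial σ k) (hf0 : f ≠ 0)
    (hfc : coeff 0 f = 0) :
    ∃ j : σ, ∀ (n : ℕ) (p q g : MvPolynomial σ k),
      (∀ b ∈ p.support, b.degree = n ∧ b j = 0) →
      q ∈ (Ideal.span (Set.range (X (R := k) (σ := σ)))) ^ (n + 1) →
      p = q + g * f → p = 0 := by
  set M := Ideal.span (Set.range (X (R := k) (σ := σ))) with hM
  -- choose b₀ of minimal degree in f.support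
  obtain ⟨b₀, hb₀, hb₀min⟩ := Finset.exists_min_image f.support Finsupp.degree
    (by rwa [Finset.nonempty_iff_ne_empty, ne_eq, MvPolynomial.support_eq_empty])
  have hb₀ne : b₀ ≠ 0 := by
    intro hb
    rw [hb] at hb₀
    exact (MvPolynomial.mem_support_iff.mp hb₀) hfc
  set d := b₀.degree with hd
  have hd1 : 1 ≤ d := by
    rcases Nat.eq_zero_or_pos d with h0 | h1
    · exact absurd ((Finsupp.degree_eq_zero_iff _).mp h0) hb₀ne
    · exact h1
  obtain ⟨j, hj⟩ := Finsupp.support_nonempty_iff.mpr hb₀ne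
  have hjb₀ : b₀ j ≠ 0 := Finsupp.mem_support_iff.mp hj
  have hfd : f ∈ M ^ d := (mem_pow_iff d f).mpr fun b hb => hb₀min b hb
  have hfdcomp : coeff b₀ (homogeneousComponent d f) = coeff b₀ f := by
    rw [coeff_homogeneousComponent, if_pos rfl]
  have hfdne : homogeneousComponent d f ≠ 0 := by
    intro h0
    apply MvPolynomial.mem_support_iff.mp hb₀
    rw [← hfdcomp, h0, MvPolynomial.coeff_zero]
  refine ⟨j, fun n p q g hp hq heq => ?_⟩
  by_contra hp0
  -- p is "homogeneous of degree n"
  have hpn : homogeneousComponent n p = p := by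
    ext b
    rw [coeff_homogeneousComponent]
    by_cases hb : b.degree = n
    · rw [if_pos hb]
    · rw [if_neg hb]
      by_contra hcb
      exact hb (hp b (MvPolynomial.mem_support_iff.mpr fun hc => (Ne.symm hcb) hc)).1
  have hpmem : p ∈ M ^ n := (mem_pow_iff n p).mpr fun b hb => le_of_eq (hp b hb).1.symm
  have hgfmem : g * f ∈ M ^ n := by
    have : g * f = p - q := by rw [heq]; ring
    rw [this]
    exact Ideal.sub_mem _ hpmem (Ideal.pow_le_pow_right (by omega) hq)
  -- g ≠ 0
  have hg0 : g ≠ 0 := by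
    intro h0
    rw [h0, zero_mul, add_zero] at heq
    apply hp0
    rw [← hpn, heq]
    exact homogeneousComponent_eq_zero_of_mem_pow hq (by omega)
  -- minimal degree of g
  obtain ⟨c₀, hc₀, hc₀min⟩ := Finset.exists_min_image g.support Finsupp.degree
    (by rwa [Finset.nonempty_iff_ne_empty, ne_eq, MvPolynomial.support_eq_empty])
  set e := c₀.degree with he
  have hge : g ∈ M ^ e := (mem_pow_iff e g).mpr fun b hb => hc₀min b hb
  have hgecomp : coeff c₀ (homogeneousComponent e g) = coeff c₀ g := by
    rw [coeff_homogeneousComponent, if_pos rfl]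
  have hgene : homogeneousComponent e g ≠ 0 := by
    intro h0
    apply MvPolynomial.mem_support_iff.mp hc₀
    rw [← hgecomp, h0, MvPolynomial.coeff_zero]
  have hcomp : homogeneousComponent (e + d) (g * f) =
      homogeneousComponent e g * homogeneousComponent d f :=
    homogeneousComponent_mul_of_mem hge hfd
  have hcompne : homogeneousComponent (e + d) (g * f) ≠ 0 := by
    rw [hcomp]; exact mul_ne_zero hgene hfdne
  have hned : n ≤ e + d := by
    by_contra hlt
    exact hcompne (homogeneousComponent_eq_zero_of_mem_pow hgfmem (by omega))
  have hgfed : g * f ∈ M ^ (e + d) := by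
    have := Ideal.mul_mem_mul hge hfd
    rwa [← pow_add] at this
  have hpn' : p = homogeneousComponent n (g * f) := by
    have := congrArg (homogeneousComponent n) heq
    rw [map_add, hpn, homogeneousComponent_eq_zero_of_mem_pow hq (by omega), zero_add] at this
    exact this
  have hedn : e + d = n := by
    by_contra hne
    apply hp0
    rw [hpn']
    exact homogeneousComponent_eq_zero_of_mem_pow hgfed (by omega)
  have hpfact : p = homogeneousComponent e g * homogeneousComponent d f := by
    rw [hpn', ← hedn, hcomp]
  have hfdj : ∀ b ∈ (homogeneousComponent d f).support, b j = 0 := by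
    apply divisor_support j hgene
    intro b hb
    rw [← hpfact] at hb
    exact (hp b hb).2
  have hb₀fd : b₀ ∈ (homogeneousComponent d f).support :=
    MvPolynomial.mem_support_iff.mpr (by rw [hfdcomp]; exact MvPolynomial.mem_support_iff.mp hb₀)
  exact hjb₀ (hfdj b₀ hb₀fd)

end St10Aux


/-- Let `k` be a field, `s ≥ 2`, and `f ∈ k[x₁,…,x_s]` a nonzero
polynomial with zero constant term. Let `B = k[x₁,…,x_s]/⟨f⟩` and `m = (x₁,…,x_s)B`.
Then for every `n ≥ 0`, `dim_k mⁿ/m^{n+1} ≥ C(s−2+n, s−2)`. -/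
theorem statement_10 {k : Type*} [Field k] (s : ℕ) (hs : 2 ≤ s)
    (f : MvPolynomial (Fin s) k) (hf0 : f ≠ 0) (hfc : MvPolynomial.coeff 0 f = 0) (n : ℕ) :
    Nat.choose (s - 2 + n) (s - 2) ≤
      Module.finrank k
        (↥((Ideal.span (Set.range fun i : Fin s =>
              Ideal.Quotient.mk (Ideal.span {f}) (MvPolynomial.X i))) ^ n) ⧸
          Submodule.comap
            (((Ideal.span (Set.range fun i : Fin s =>
              Ideal.Quotient.mk (Ideal.span {f}) (MvPolynomial.X i))) ^ n).subtype)
            ((Ideal.span (Set.range fun i : Fin s =>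
              Ideal.Quotient.mk (Ideal.span {f}) (MvPolynomial.X i))) ^ (n + 1))) := by
  classical
  set I : Ideal (MvPolynomial (Fin s) k) := Ideal.span {f} with hI
  set π := Ideal.Quotient.mk I with hπ
  set M : Ideal (MvPolynomial (Fin s) k ⧸ I) := Ideal.span (Set.range fun i : Fin s => π (X i)) with hMdef
  set mA : Ideal (MvPolynomial (Fin s) k) :=
    Ideal.span (Set.range (X : Fin s → MvPolynomial (Fin s) k)) with hmA
  have hπsurj : Function.Surjective π := Ideal.Quotient.mk_surjective
  have hmap : M = Ideal.map π mA := by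
    rw [hMdef, hmA, Ideal.map_span, ← Set.range_comp]; rfl
  have hpow : ∀ N : ℕ, M ^ N = Ideal.map π (mA ^ N) := fun N => by
    rw [hmap, ← Ideal.map_pow]
  have hcomap : ∀ N : ℕ, Ideal.comap π (M ^ N) = mA ^ N ⊔ I := fun N => by
    rw [hpow, Ideal.comap_map_of_surjective π hπsurj, ← RingHom.ker_eq_comap_bot, Ideal.mk_ker]
  obtain ⟨j, hj⟩ := St10Aux.exists_good_var f hf0 hfc
  -- index type
  set ι := {P : {i : Fin s // i ≠ j} →₀ ℕ // (P.sum fun _ => id) = n} with hι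
  letI : Fintype ι := Fintype.ofEquiv _ (Sym.equivNatSum {i : Fin s // i ≠ j} n)
  set emb : {i : Fin s // i ≠ j} ↪ Fin s := Function.Embedding.subtype _ with hemb
  set a : ι → (Fin s →₀ ℕ) := fun P => Finsupp.embDomain emb P.1 with haa
  have ha_deg : ∀ P : ι, (a P).degree = n := by
    intro P
    rw [haa, St10Aux.degree_eq_sum, Finsupp.sum_embDomain]
    exact P.2
  have ha_j : ∀ P : ι, (a P) j = 0 := by
    intro P
    apply Finsupp.embDomain_notin_range
    rintro ⟨⟨i, hi⟩, h⟩
    exact hi h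
  have ha_inj : Function.Injective a := fun P Q h =>
    Subtype.ext (Finsupp.embDomain_injective emb h)
  have hmono_mem : ∀ P : ι, π (monomial (a P) (1 : k)) ∈ M ^ n := by
    intro P
    rw [hpow]
    refine Ideal.mem_map_of_mem _ ?_
    have h1 := St10Aux.monomial_one_mem_pow (k := k) (a P)
    rw [ha_deg P] at h1
    rw [hmA]
    exact h1
  set W := Submodule.comap ((M ^ n).subtype) (M ^ (n + 1)) with hW
  set F : ι → (↥(M ^ n) ⧸ W) :=
    fun P => Submodule.Quotient.mk ⟨π (monomial (a P) 1), hmono_mem P⟩ with hF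
  -- linear independence
  have hindep : LinearIndependent k F := by
    rw [Fintype.linearIndependent_iff]
    intro c hc
    set p : MvPolynomial (Fin s) k := ∑ P : ι, monomial (a P) (c P) with hp
    have hsupp : ∀ b ∈ p.support, b.degree = n ∧ b j = 0 := by
      intro b hb
      have h1 := MvPolynomial.support_sum hb
      rw [Finset.mem_biUnion] at h1
      obtain ⟨P, -, hbP⟩ := h1
      have hba : b = a P := by
        rw [support_monomial] at hbP
        by_cases hc0 : c P = 0
        · rw [if_pos hc0] at hbP; exact absurd hbP (Finset.notMem_empty b)
        · rw [if_neg hc0] at hbP; exact Finset.mem_singleton.mp hbP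
      rw [hba]
      exact ⟨ha_deg P, ha_j P⟩
    have hsmul : ∀ P : ι, c P • π (monomial (a P) (1 : k)) = π (monomial (a P) (c P)) := by
      intro P
      have h1 : monomial (a P) (c P) = c P • monomial (a P) (1 : k) := by
        rw [MvPolynomial.smul_monomial, smul_eq_mul, mul_one]
      rw [h1, hπ, ← Ideal.Quotient.mkₐ_eq_mk k I, map_smul]
    have hπp : π p ∈ M ^ (n + 1) := by
      have h0 : W.mkQ (∑ P : ι, c P • (⟨π (monomial (a P) 1), hmono_mem P⟩ : ↥(M ^ n))) = 0 := by
        calc W.mkQ (∑ P : ι, c P • (⟨π (monomial (a P) 1), hmono_mem P⟩ : ↥(M ^ n)))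
            = ∑ P : ι, c P • F P := by
              rw [map_sum]
              refine Finset.sum_congr rfl fun P _ => ?_
              rw [LinearMap.map_smul_of_tower]
              rfl
          _ = 0 := hc
      have h1 : (∑ P : ι, c P • (⟨π (monomial (a P) 1), hmono_mem P⟩ : ↥(M ^ n))) ∈ W := by
        rw [← Submodule.Quotient.mk_eq_zero W, ← Submodule.mkQ_apply]
        exact h0
      have h2 := Submodule.mem_comap.mp h1
      rw [Submodule.subtype_apply] at h2
      have h3 : ((∑ P : ι, c P • (⟨π (monomial (a P) 1), hmono_mem P⟩ : ↥(M ^ n)) : ↥(M ^ n)) :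
          MvPolynomial (Fin s) k ⧸ I)
          = π p := by
        rw [AddSubmonoidClass.coe_finset_sum]
        rw [hp, map_sum]
        refine Finset.sum_congr rfl fun P _ => ?_
        rw [SetLike.val_smul_of_tower]
        exact hsmul P
      rwa [h3] at h2
    have hpA : p ∈ mA ^ (n + 1) ⊔ I := by
      rw [← hcomap (n + 1)]
      exact Ideal.mem_comap.mpr hπp
    obtain ⟨q, hq, r, hr, hqr⟩ := Submodule.mem_sup.mp hpA
    rw [hI] at hr
    obtain ⟨g, hg⟩ := Ideal.mem_span_singleton'.mp hr
    have hq' : q ∈ (Ideal.span (Set.range (X : Fin s → MvPolynomial (Fin s) k))) ^ (n + 1) := by rwa [hmA] at hq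
    have hp0 : p = 0 := hj n p q g hsupp hq' (by rw [← hqr, hg])
    intro P
    have hcoeff : MvPolynomial.coeff (a P) p = c P := by
      rw [hp, MvPolynomial.coeff_sum]
      rw [Finset.sum_eq_single_of_mem P (Finset.mem_univ P)]
      · rw [MvPolynomial.coeff_monomial, if_pos rfl]
      · intro Q _ hQP
        rw [MvPolynomial.coeff_monomial, if_neg (fun hh => hQP (ha_inj hh))]
    rw [hp0, MvPolynomial.coeff_zero] at hcoeff
    exact hcoeff.symm
  -- finiteness
  haveI hfinT : Module.Finite k ((MvPolynomial (Fin s) k ⧸ I) ⧸ (M ^ (n + 1))) := by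
    set Φ : MvPolynomial (Fin s) k →ₗ[k] ((MvPolynomial (Fin s) k ⧸ I) ⧸ (M ^ (n + 1))) :=
      (((M ^ (n + 1)).mkQ).restrictScalars k).comp (Ideal.Quotient.mkₐ k I).toLinearMap with hΦ
    have hΦapply : ∀ w : MvPolynomial (Fin s) k, Φ w = Submodule.Quotient.mk (π w) := fun w => rfl
    refine Module.Finite.of_surjective (Φ.comp (restrictTotalDegree (Fin s) k n).subtype) ?_
    intro y
    obtain ⟨b, rfl⟩ := Submodule.Quotient.mk_surjective _ y
    obtain ⟨w, rfl⟩ := hπsurj b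
    set w' : MvPolynomial (Fin s) k := ∑ i ∈ Finset.range (n + 1), homogeneousComponent i w with hw'
    have hw'coeff : ∀ b : Fin s →₀ ℕ, b.degree ≤ n →
        MvPolynomial.coeff b w' = MvPolynomial.coeff b w := by
      intro b hb
      rw [hw', MvPolynomial.coeff_sum]
      simp only [coeff_homogeneousComponent]
      rw [Finset.sum_ite_eq (Finset.range (n + 1)) b.degree (fun _ => MvPolynomial.coeff b w)]
      rw [if_pos (Finset.mem_range.mpr (by omega))]
    have hdiff : w - w' ∈ mA ^ (n + 1) := by
      rw [hmA, St10Aux.mem_pow_iff]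
      intro b hb
      rw [MvPolynomial.mem_support_iff, MvPolynomial.coeff_sub] at hb
      by_contra hdeg
      exact hb (by rw [hw'coeff b (by omega), sub_self])
    have hw'mem : w' ∈ restrictTotalDegree (Fin s) k n := by
      rw [mem_restrictTotalDegree]
      refine le_trans (totalDegree_finset_sum _ _) ?_
      refine Finset.sup_le fun i hi => ?_
      refine le_trans ((homogeneousComponent_isHomogeneous i w).totalDegree_le) ?_
      exact Nat.le_of_lt_succ (Finset.mem_range.mp hi)
    refine ⟨⟨w', hw'mem⟩, ?_⟩
    rw [LinearMap.comp_apply, Submodule.subtype_apply, hΦapply]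
    refine (Submodule.Quotient.eq _).mpr ?_
    have : π w' - π w = π (w' - w) := by rw [map_sub]
    rw [this]
    rw [hpow]
    refine Ideal.mem_map_of_mem _ ?_
    have : w' - w = -(w - w') := by ring
    rw [this]
    exact neg_mem hdiff
  haveI hfinV : FiniteDimensional k (↥(M ^ n) ⧸ W) := by
    have hle : W ≤ LinearMap.ker (((M ^ (n + 1)).mkQ).comp (M ^ n).subtype) := by
      rw [LinearMap.ker_comp, Submodule.ker_mkQ]
    set G := W.liftQ (((M ^ (n + 1)).mkQ).comp (M ^ n).subtype) hle with hG
    have hGinj : Function.Injective G := by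
      rw [← LinearMap.ker_eq_bot]
      refine Submodule.ker_liftQ_eq_bot _ _ _ ?_
      rw [LinearMap.ker_comp, Submodule.ker_mkQ]
    exact FiniteDimensional.of_injective (G.restrictScalars k) hGinj
  -- cardinality
  have hcard : Fintype.card ι = Nat.choose (s - 2 + n) n := by
    rw [← Fintype.card_congr (Sym.equivNatSum {i : Fin s // i ≠ j} n), Sym.card_sym_eq_choose]
    have hcs : Fintype.card {i : Fin s // i ≠ j} = s - 1 := by
      rw [Fintype.card_subtype_compl, Fintype.card_subtype_eq, Fintype.card_fin]
    rw [hcs]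
    congr 1
    omega
  have hchoose : Nat.choose (s - 2 + n) (s - 2) = Nat.choose (s - 2 + n) n := by
    have h1 := Nat.choose_symm (show n ≤ s - 2 + n by omega)
    rw [show s - 2 + n - n = s - 2 from by omega] at h1
    exact h1
  rw [hchoose, ← hcard]
  exact hindep.fintype_card_le_finrank
end
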